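/- arXiv:2604.00512 — 3 statements merged into one kernel-verified Lean document; each statement's English description precedes it below -/
import Mathlib

section
/- Let A be a real symmetric n×n matrix with eigenvalues λ_1 ≥ ⋯ ≥ λ_n. If z_1, …, z_k are mutually orthonormal vectors such that ⟨z_i, A z_i⟩ = λ_i for i = 1, …, k, then each z_i is an eigenvector of A with eigenvalue λ_i. -/
open Matrix

/-- let `A` be real symmetric with eigenvalues `lam 0 ≥ ⋯ ≥ lam (n-1)`
(with orthonormal eigenbasis `v`). If `z 0, …, z (k-1)` are mutually orthonormal with
`⟨z i, A z i⟩ = lam i` for each `i`, then each `z i` is an eigenvector of `A` with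
eigenvalue `lam i`. -/
theorem stmt5 {n k : ℕ} (hk : k ≤ n) (A : Matrix (Fin n) (Fin n) ℝ) (hA : A.IsSymm)
    (v : Fin n → Fin n → ℝ) (lam : Fin n → ℝ)
    (hmono : ∀ i j : Fin n, i ≤ j → lam j ≤ lam i)
    (horth : ∀ i j, v i ⬝ᵥ v j = if i = j then 1 else 0)
    (heig : ∀ i, A.mulVec (v i) = lam i • v i)
    (z : Fin k → Fin n → ℝ)
    (hz : ∀ i j, z i ⬝ᵥ z j = if i = j then 1 else 0)
    (hray : ∀ i : Fin k, z i ⬝ᵥ A.mulVec (z i) = lam (Fin.castLE hk i)) :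
    ∀ i : Fin k, A.mulVec (z i) = lam (Fin.castLE hk i) • z i := by
  classical
  set c : Fin k → Fin n → ℝ := fun i j => z i ⬝ᵥ v j with hc
  -- completeness of the orthonormal basis
  have hcomp : ∀ a b : Fin n, (∑ j, v j a * v j b) = if a = b then 1 else 0 := by
    intro a b
    have h1 : (Matrix.of v) * (Matrix.of v)ᵀ = 1 := by
      ext i j
      simpa [Matrix.mul_apply, Matrix.one_apply, dotProduct] using horth i j
    have h2 := mul_eq_one_comm.mp h1
    have h3 := congrFun (congrFun h2 a) b
    simpa [Matrix.mul_apply, Matrix.one_apply] using h3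
  -- expansion in the basis
  have hexp : ∀ (w : Fin n → ℝ) (b : Fin n), (∑ j, (w ⬝ᵥ v j) * v j b) = w b := by
    intro w b
    calc ∑ j, (w ⬝ᵥ v j) * v j b
        = ∑ j, ∑ a, w a * v j a * v j b := by
          simp [dotProduct, Finset.sum_mul]
      _ = ∑ a, ∑ j, w a * v j a * v j b := Finset.sum_comm
      _ = ∑ a, w a * ∑ j, v j a * v j b := by
          simp [Finset.mul_sum, mul_assoc]
      _ = ∑ a, w a * (if a = b then 1 else 0) := by
          simp_rw [hcomp]
      _ = w b := by simp
  -- action of A in coordinates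
  have hAmul : ∀ (w : Fin n → ℝ) (b : Fin n),
      A.mulVec w b = ∑ j, lam j * (w ⬝ᵥ v j) * v j b := by
    intro w b
    have h0 : A.mulVec w b = ∑ a, A b a * w a := by
      simp [Matrix.mulVec, dotProduct]
    rw [h0]
    calc ∑ a, A b a * w a
        = ∑ a, A b a * ∑ j, (w ⬝ᵥ v j) * v j a := by
          simp_rw [hexp]
      _ = ∑ a, ∑ j, (w ⬝ᵥ v j) * (A b a * v j a) := by
          refine Finset.sum_congr rfl fun a _ => ?_
          rw [Finset.mul_sum]
          exact Finset.sum_congr rfl fun j _ => by ring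
      _ = ∑ j, ∑ a, (w ⬝ᵥ v j) * (A b a * v j a) := Finset.sum_comm
      _ = ∑ j, (w ⬝ᵥ v j) * (∑ a, A b a * v j a) := by
          simp [Finset.mul_sum]
      _ = ∑ j, (w ⬝ᵥ v j) * (A.mulVec (v j) b) := by
          refine Finset.sum_congr rfl fun j _ => ?_
          simp [Matrix.mulVec, dotProduct]
      _ = ∑ j, lam j * (w ⬝ᵥ v j) * v j b := by
          refine Finset.sum_congr rfl fun j _ => ?_
          rw [heig j]
          simp [Pi.smul_apply]
          ring
  -- dot products in coordinates
  have hdotc : ∀ i i' : Fin k, (∑ j, c i j * c i' j) = z i' ⬝ᵥ z i := by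
    intro i i'
    calc ∑ j, c i j * c i' j
        = ∑ j, c i' j * (∑ b, z i b * v j b) := by
          refine Finset.sum_congr rfl fun j _ => ?_
          simp only [hc, dotProduct]
          ring
      _ = ∑ j, ∑ b, z i b * ((z i' ⬝ᵥ v j) * v j b) := by
          refine Finset.sum_congr rfl fun j _ => ?_
          rw [Finset.mul_sum]
          exact Finset.sum_congr rfl fun b _ => by simp [hc]; ring
      _ = ∑ b, ∑ j, z i b * ((z i' ⬝ᵥ v j) * v j b) := Finset.sum_comm
      _ = ∑ b, z i b * ∑ j, (z i' ⬝ᵥ v j) * v j b := by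
          simp [Finset.mul_sum]
      _ = ∑ b, z i b * z i' b := by simp_rw [hexp]
      _ = z i' ⬝ᵥ z i := by simp [dotProduct, mul_comm]
  -- Rayleigh quotient in coordinates
  have hraycoord : ∀ i : Fin k, z i ⬝ᵥ A.mulVec (z i) = ∑ j, lam j * (c i j)^2 := by
    intro i
    calc z i ⬝ᵥ A.mulVec (z i)
        = ∑ b, z i b * A.mulVec (z i) b := by simp [dotProduct]
      _ = ∑ b, ∑ j, lam j * c i j * (z i b * v j b) := by
          refine Finset.sum_congr rfl fun b _ => ?_
          rw [hAmul (z i) b, Finset.mul_sum]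
          exact Finset.sum_congr rfl fun j _ => by simp [hc]; ring
      _ = ∑ j, ∑ b, lam j * c i j * (z i b * v j b) := Finset.sum_comm
      _ = ∑ j, lam j * c i j * (z i ⬝ᵥ v j) := by
          simp [Finset.mul_sum, dotProduct]
      _ = ∑ j, lam j * (c i j)^2 := by
          refine Finset.sum_congr rfl fun j _ => ?_
          simp [hc]; ring
  -- support of an eigenvector of eigenvalue t
  have hsupp : ∀ (i' : Fin k) (t : ℝ), A.mulVec (z i') = t • z i' →
      ∀ j : Fin n, lam j ≠ t → c i' j = 0 := by
    intro i' t ht j hj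
    have e1 : v j ⬝ᵥ A.mulVec (z i') = t * (v j ⬝ᵥ z i') := by
      rw [ht]
      simp only [dotProduct, Pi.smul_apply, smul_eq_mul, Finset.mul_sum]
      exact Finset.sum_congr rfl fun x _ => by ring
    have e2 : v j ⬝ᵥ A.mulVec (z i') = lam j * (v j ⬝ᵥ z i') := by
      rw [Matrix.dotProduct_mulVec, ← Matrix.mulVec_transpose, hA.eq, heig j]
      simp [smul_dotProduct]
    have e3 : (lam j - t) * (v j ⬝ᵥ z i') = 0 := by
      rw [sub_mul, ← e1, ← e2, sub_self]
    have e4 : v j ⬝ᵥ z i' = 0 := by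
      rcases mul_eq_zero.mp e3 with h | h
      · exact absurd (sub_eq_zero.mp h) hj
      · exact h
    simpa [hc, dotProduct, mul_comm] using e4
  -- main: strong induction on i
  suffices main : ∀ m : ℕ, ∀ i : Fin k, i.val = m →
      A.mulVec (z i) = lam (Fin.castLE hk i) • z i by
    intro i; exact main i.val i rfl
  intro m
  induction m using Nat.strong_induction_on with
  | _ m IH =>
  intro i him
  subst him
  set μ := lam (Fin.castLE hk i) with hμ
  -- the key support statement for z i
  have hsup : ∀ j : Fin n, μ < lam j → c i j = 0 := by
    intro j0 hj0
    -- sets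
    set T : Finset (Fin k) := Finset.univ.filter (fun i' => μ < lam (Fin.castLE hk i')) with hT
    -- members of T are < i
    have hTlt : ∀ i' ∈ T, i' < i := by
      intro i' hi'
      rw [hT, Finset.mem_filter] at hi'
      by_contra hle
      push_neg at hle
      have : Fin.castLE hk i ≤ Fin.castLE hk i' := hle
      exact absurd (hmono _ _ this) (not_le.mpr hi'.2)
    -- earlier z's are eigenvectors, with support where lam = their eigenvalue
    have hTeig : ∀ i' ∈ T, ∀ j : Fin n, ¬ μ < lam j → c i' j = 0 := by
      intro i' hi' j hj
      have hlt := hTlt i' hi'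
      have he := IH i'.val hlt i' rfl
      refine hsupp i' _ he j ?_
      rw [hT, Finset.mem_filter] at hi'
      intro hcontra
      rw [hcontra] at hj
      exact hj hi'.2
    -- reindexing lemma: sums over Fin n of functions supported on high part
    have hre : ∀ g : Fin n → ℝ, (∀ j, ¬ μ < lam j → g j = 0) →
        (∑ j, g j) = ∑ i' ∈ T, g (Fin.castLE hk i') := by
      intro g hg
      have hjk : ∀ j : Fin n, μ < lam j → (j : ℕ) < k := by
        intro j hj
        have hjlt : j < Fin.castLE hk i := by
          by_contra hle
          push_neg at hle
          exact absurd (hmono _ _ hle) (not_le.mpr hj)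
        calc (j : ℕ) < (i : ℕ) := hjlt
          _ < k := i.isLt
      rw [← Finset.sum_filter_of_ne (s := Finset.univ)
        (p := fun j => μ < lam j) (by intro j _ hgj; by_contra hc'; exact hgj (hg j hc'))]
      refine (Finset.sum_bij' (fun a _ => Fin.castLE hk a)
        (fun j hj => ⟨(j : ℕ), hjk j (by simpa using (Finset.mem_filter.mp hj).2)⟩)
        ?_ ?_ ?_ ?_ ?_).symm
      · intro a ha
        rw [hT, Finset.mem_filter] at ha
        simp [ha.2]
      · intro a ha
        have h2 : μ < lam a := by simpa using (Finset.mem_filter.mp ha).2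
        rw [hT, Finset.mem_filter]
        exact ⟨Finset.mem_univ _, h2⟩
      · intro a _; ext; rfl
      · intro a _; ext; rfl
      · intro a _; rfl
    -- the square matrix B of coordinates of early z's on the high eigenvectors
    set B : Matrix ↥T ↥T ℝ := fun a b => c (a : Fin k) (Fin.castLE hk (b : Fin k)) with hB
    have hBBt : B * Bᵀ = 1 := by
      ext a b
      rw [Matrix.mul_apply]
      have : ∑ j' : ↥T, B a j' * Bᵀ j' b
          = ∑ j' ∈ T, c (a : Fin k) (Fin.castLE hk j') * c (b : Fin k) (Fin.castLE hk j') := by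
        rw [← Finset.sum_coe_sort T
          (fun j' => c (a : Fin k) (Fin.castLE hk j') * c (b : Fin k) (Fin.castLE hk j'))]
        rfl
      rw [this, ← hre (fun j => c (a : Fin k) j * c (b : Fin k) j)
        (fun j hj => by
          show c (a : Fin k) j * c (b : Fin k) j = 0
          rw [hTeig (a : Fin k) a.2 j hj, zero_mul]),
        hdotc, hz]
      by_cases hab : a = b
      · simp [hab, Matrix.one_apply]
      · have hab' : ¬((b : Fin k) = (a : Fin k)) := fun h => hab (Subtype.ext h.symm)
        simp [hab, hab', Matrix.one_apply]
    have hBtB : Bᵀ * B = 1 := mul_eq_one_comm.mp hBBt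
    -- j0 corresponds to an element of T
    have hj0k : (j0 : ℕ) < k := by
      have hjlt : j0 < Fin.castLE hk i := by
        by_contra hle
        push_neg at hle
        exact absurd (hmono _ _ hle) (not_le.mpr hj0)
      calc (j0 : ℕ) < (i : ℕ) := hjlt
        _ < k := i.isLt
    have hi0T : (⟨(j0 : ℕ), hj0k⟩ : Fin k) ∈ T := by
      rw [hT, Finset.mem_filter]
      refine ⟨Finset.mem_univ _, ?_⟩
      have : Fin.castLE hk ⟨(j0 : ℕ), hj0k⟩ = j0 := by ext; rfl
      rw [this]; exact hj0
    set x0 : ↥T := ⟨⟨(j0 : ℕ), hj0k⟩, hi0T⟩ with hx0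
    have hcast : Fin.castLE hk (x0 : Fin k) = j0 := by ext; rfl
    -- compute c i j0
    have key : c i j0 = ∑ j' : ↥T, c i (Fin.castLE hk (j' : Fin k)) * (Bᵀ * B) j' x0 := by
      rw [hBtB]
      simp only [Matrix.one_apply, mul_ite, mul_one, mul_zero]
      rw [Finset.sum_ite_eq' Finset.univ x0
        (fun j' => c i (Fin.castLE hk (j' : Fin k)))]
      simp [hcast]
    rw [key]
    have expand : ∀ j' : ↥T, (Bᵀ * B) j' x0 = ∑ i' : ↥T, B i' j' * B i' x0 := by
      intro j'
      rw [Matrix.mul_apply]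
      exact Finset.sum_congr rfl fun i' _ => by rw [Matrix.transpose_apply]
    calc ∑ j' : ↥T, c i (Fin.castLE hk (j' : Fin k)) * (Bᵀ * B) j' x0
        = ∑ j' : ↥T, ∑ i' : ↥T, c i (Fin.castLE hk (j' : Fin k)) * (B i' j' * B i' x0) := by
          refine Finset.sum_congr rfl fun j' _ => ?_
          rw [expand j', Finset.mul_sum]
      _ = ∑ i' : ↥T, ∑ j' : ↥T, c i (Fin.castLE hk (j' : Fin k)) * (B i' j' * B i' x0) :=
          Finset.sum_comm
      _ = ∑ i' : ↥T, (∑ j' : ↥T, c i (Fin.castLE hk (j' : Fin k)) * B i' j') * B i' x0 := by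
          refine Finset.sum_congr rfl fun i' _ => ?_
          rw [Finset.sum_mul]
          exact Finset.sum_congr rfl fun j' _ => by ring
      _ = ∑ i' : ↥T, (z (i' : Fin k) ⬝ᵥ z i) * B i' x0 := by
          refine Finset.sum_congr rfl fun i' _ => ?_
          have h1 : ∑ j' : ↥T, c i (Fin.castLE hk (j' : Fin k)) * B i' j'
              = ∑ j' ∈ T, c i (Fin.castLE hk j') * c (i' : Fin k) (Fin.castLE hk j') := by
            rw [← Finset.sum_coe_sort T
              (fun j' => c i (Fin.castLE hk j') * c (i' : Fin k) (Fin.castLE hk j'))]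
          rw [h1, ← hre (fun j => c i j * c (i' : Fin k) j)
            (fun j hj => by
              show c i j * c (i' : Fin k) j = 0
              rw [hTeig (i' : Fin k) i'.2 j hj, mul_zero]), hdotc]
      _ = 0 := by
          refine Finset.sum_eq_zero fun i' _ => ?_
          have hne : (i' : Fin k) ≠ i := ne_of_lt (hTlt _ i'.2)
          rw [hz]
          simp [hne]
  -- conclude from the equality case of the Rayleigh bound
  have hnorm : (∑ j, (c i j)^2) = 1 := by
    have h : (∑ j, c i j * c i j) = 1 := by rw [hdotc i i, hz]; simp
    rw [← h]
    exact Finset.sum_congr rfl fun j _ => by ring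
  have hsum0 : (∑ j, (μ - lam j) * (c i j)^2) = 0 := by
    have h1 : (∑ j, lam j * (c i j)^2) = μ := by rw [← hraycoord i, hray i]
    have : (∑ j, (μ - lam j) * (c i j)^2)
        = μ * (∑ j, (c i j)^2) - ∑ j, lam j * (c i j)^2 := by
      rw [Finset.mul_sum, ← Finset.sum_sub_distrib]
      exact Finset.sum_congr rfl fun j _ => by ring
    rw [this, hnorm, h1]; ring
  have hterm : ∀ j : Fin n, (μ - lam j) * (c i j)^2 = 0 := by
    have hnn : ∀ j ∈ Finset.univ, (0:ℝ) ≤ (μ - lam j) * (c i j)^2 := by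
      intro j _
      rcases le_or_gt (lam j) μ with h | h
      · exact mul_nonneg (by linarith) (sq_nonneg _)
      · rw [hsup j h]; simp
    intro j
    exact (Finset.sum_eq_zero_iff_of_nonneg hnn).mp hsum0 j (Finset.mem_univ j)
  have hlc : ∀ j : Fin n, lam j * c i j = μ * c i j := by
    intro j
    rcases mul_eq_zero.mp (hterm j) with h | h
    · rw [sub_eq_zero] at h; rw [← h]
    · have : c i j = 0 := by
        have := sq_eq_zero_iff.mp h
        exact this
      rw [this, mul_zero, mul_zero]
  funext b
  rw [hAmul (z i) b]
  calc ∑ j, lam j * (z i ⬝ᵥ v j) * v j b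
      = ∑ j, μ * ((z i ⬝ᵥ v j) * v j b) := by
        refine Finset.sum_congr rfl fun j _ => ?_
        have h2 := hlc j
        simp only [hc] at h2
        rw [h2]; ring
    _ = μ * ∑ j, (z i ⬝ᵥ v j) * v j b := by rw [Finset.mul_sum]
    _ = μ * z i b := by rw [hexp]
    _ = (μ • z i) b := rfl
end

section
/- Suppose c > 0 is a constant such that λ_1(G) + λ_2(G) ≤ c·n + o(n) holds for all graphs G on n vertices (i.e., for every ε > 0 there is N such that λ_1(G) + λ_2(G) ≤ (c+ε)n for all graphs G on n ≥ N vertices). Then λ_1(G) + λ_2(G) ≤ c·n holds for every graph G on n vertices. -/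
open Matrix

/-- The adjacency matrix of a graph is Hermitian (it is real symmetric). -/
theorem adjMatrix_isHermitian {n : ℕ} (G : SimpleGraph (Fin n)) [DecidableRel G.Adj] :
    (G.adjMatrix ℝ).IsHermitian := by
  rw [Matrix.IsHermitian, conjTranspose_eq_transpose_of_trivial]
  exact G.isSymm_adjMatrix

/-- `λ₁(G) + λ₂(G)`: the sum of the two largest adjacency eigenvalues (with
multiplicity), expressed as the supremum of `μ i + μ j` over pairs of distinct
indices `i ≠ j`, where `μ` enumerates all adjacency eigenvalues with multiplicity. -/
noncomputable def specSum {n : ℕ} (G : SimpleGraph (Fin n)) [DecidableRel G.Adj] : ℝ :=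
  sSup {x : ℝ | ∃ i j : Fin n, i ≠ j ∧
    x = (adjMatrix_isHermitian G).eigenvalues i + (adjMatrix_isHermitian G).eigenvalues j}

section Aux

set_option linter.unusedVariables false

lemma dot_eq_inner {m : Type*} [Fintype m] (u v : m → ℝ) :
    u ⬝ᵥ v = (inner ℝ ((WithLp.equiv 2 _).symm u) ((WithLp.equiv 2 _).symm v) : ℝ) := by
  change u ⬝ᵥ v = v ⬝ᵥ star u; rw [star_trivial, dotProduct_comm]

variable {m : Type*} [Fintype m] [DecidableEq m]

lemma eigen_coeff {M : Matrix m m ℝ} (hM : M.IsHermitian) {u : m → ℝ} {a : ℝ}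
    (hu : M *ᵥ u = a • u) (i : m) (h : hM.eigenvalues i ≠ a) :
    ⇑(hM.eigenvectorBasis i) ⬝ᵥ u = 0 := by
  have hMt : Mᵀ = M := by
    rw [← conjTranspose_eq_transpose_of_trivial]; exact hM
  have h1 : ⇑(hM.eigenvectorBasis i) ⬝ᵥ (M *ᵥ u)
      = hM.eigenvalues i * (⇑(hM.eigenvectorBasis i) ⬝ᵥ u) := by
    rw [dotProduct_mulVec, ← mulVec_transpose, hMt, hM.mulVec_eigenvectorBasis]
    simp [smul_dotProduct]
  rw [hu] at h1
  simp only [dotProduct_smul, smul_eq_mul] at h1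
  have h2 := sub_eq_zero.mpr h1.symm
  rw [← sub_mul] at h2
  rcases mul_eq_zero.mp h2 with h' | h'
  · exact absurd (sub_eq_zero.mp h') h
  · exact h'

lemma repr_eq_dot {M : Matrix m m ℝ} (hM : M.IsHermitian) (u : m → ℝ) (i : m) :
    hM.eigenvectorBasis.repr ((WithLp.equiv 2 _).symm u) i
      = ⇑(hM.eigenvectorBasis i) ⬝ᵥ u := by
  rw [OrthonormalBasis.repr_apply_apply, dot_eq_inner]
  congr 1

lemma exists_nonzero_coeff {M : Matrix m m ℝ} (hM : M.IsHermitian) {u : m → ℝ}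
    (hu0 : u ≠ 0) : ∃ i, ⇑(hM.eigenvectorBasis i) ⬝ᵥ u ≠ 0 := by
  by_contra hall
  push_neg at hall
  apply hu0
  have h1 : hM.eigenvectorBasis.repr ((WithLp.equiv 2 _).symm u) = 0 := by
    ext i
    have := hall i; rw [← repr_eq_dot hM u i] at this; simpa using this
  have h2 := hM.eigenvectorBasis.repr.map_eq_zero_iff.mp h1
  have h3 := congrArg (WithLp.equiv 2 (m → ℝ)) h2
  simpa using h3

lemma parseval {M : Matrix m m ℝ} (hM : M.IsHermitian) (u v : m → ℝ) :
    ∑ i, (⇑(hM.eigenvectorBasis i) ⬝ᵥ u) * (⇑(hM.eigenvectorBasis i) ⬝ᵥ v) = u ⬝ᵥ v := by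
  have h := hM.eigenvectorBasis.repr.inner_map_map
      ((WithLp.equiv 2 _).symm u) ((WithLp.equiv 2 _).symm v)
  rw [dot_eq_inner, ← h, PiLp.inner_apply]
  simp only [RCLike.inner_apply, starRingEnd_apply, star_trivial]
  exact Finset.sum_congr rfl fun i _ => by rw [repr_eq_dot, repr_eq_dot, mul_comm]

/-- If a real symmetric matrix has two orthogonal nonzero eigenvectors with eigenvalues
`a` and `b`, then `a` and `b` occur among `hM.eigenvalues` at two distinct indices. -/
lemma exists_pair_eigenvalues {M : Matrix m m ℝ} (hM : M.IsHermitian) {u v : m → ℝ} {a b : ℝ}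
    (hu : M *ᵥ u = a • u) (hv : M *ᵥ v = b • v)
    (hu0 : u ≠ 0) (hv0 : v ≠ 0) (huv : u ⬝ᵥ v = 0) :
    ∃ i j : m, i ≠ j ∧ hM.eigenvalues i = a ∧ hM.eigenvalues j = b := by
  obtain ⟨i₀, hi₀⟩ := exists_nonzero_coeff hM hu0
  obtain ⟨j₀, hj₀⟩ := exists_nonzero_coeff hM hv0
  have hia : hM.eigenvalues i₀ = a := by
    by_contra h; exact hi₀ (eigen_coeff hM hu i₀ h)
  have hjb : hM.eigenvalues j₀ = b := by
    by_contra h; exact hj₀ (eigen_coeff hM hv j₀ h)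
  by_cases hij : i₀ = j₀
  · subst hij
    have hsum : ∑ i, (⇑(hM.eigenvectorBasis i) ⬝ᵥ u) * (⇑(hM.eigenvectorBasis i) ⬝ᵥ v) = 0 := by
      rw [parseval hM u v, huv]
    have hterm : (⇑(hM.eigenvectorBasis i₀) ⬝ᵥ u) * (⇑(hM.eigenvectorBasis i₀) ⬝ᵥ v) ≠ 0 :=
      mul_ne_zero hi₀ hj₀
    have hrest : ∑ i ∈ Finset.univ.erase i₀,
        (⇑(hM.eigenvectorBasis i) ⬝ᵥ u) * (⇑(hM.eigenvectorBasis i) ⬝ᵥ v) ≠ 0 := by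
      rw [← Finset.add_sum_erase _ _ (Finset.mem_univ i₀)] at hsum
      intro h0
      rw [h0, add_zero] at hsum
      exact hterm hsum
    obtain ⟨k, hk, hk0⟩ := Finset.exists_ne_zero_of_sum_ne_zero hrest
    have hku : ⇑(hM.eigenvectorBasis k) ⬝ᵥ u ≠ 0 := fun h => hk0 (by rw [h, zero_mul])
    have hka : hM.eigenvalues k = a := by
      by_contra h; exact hku (eigen_coeff hM hu k h)
    exact ⟨k, i₀, Finset.ne_of_mem_erase hk, hka, hjb⟩
  · exact ⟨i₀, j₀, hij, hia, hjb⟩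

end Aux

section Blowup

variable {n t : ℕ}

lemma lift_mulVec (G : SimpleGraph (Fin n)) (inst : DecidableRel G.Adj)
    (w : Fin n → ℝ) (x : Fin (n * t)) :
    letI := inst
    letI : DecidableRel (G.comap (fun x : Fin (n*t) => (finProdFinEquiv.symm x).1)).Adj :=
      fun a b => inst _ _
    ((G.comap (fun x : Fin (n*t) => (finProdFinEquiv.symm x).1)).adjMatrix ℝ *ᵥ
        (w ∘ fun x : Fin (n*t) => (finProdFinEquiv.symm x).1)) x
      = (t : ℝ) * (G.adjMatrix ℝ *ᵥ w) ((finProdFinEquiv.symm x).1) := by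
  letI := inst
  letI : DecidableRel (G.comap (fun x : Fin (n*t) => (finProdFinEquiv.symm x).1)).Adj :=
    fun a b => inst _ _
  have hf : ∀ p : Fin n × Fin t,
      ((finProdFinEquiv.symm (finProdFinEquiv p)).1 : Fin n) = p.1 := fun p => by
    rw [Equiv.symm_apply_apply]
  simp only [mulVec, dotProduct, Function.comp, SimpleGraph.adjMatrix_apply,
    SimpleGraph.comap_adj]
  rw [← Fintype.sum_equiv (finProdFinEquiv (m := n) (n := t))
    (fun p => (if G.Adj ((finProdFinEquiv.symm x).1) p.1 then (1:ℝ) else 0) * w p.1)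
    _ (fun p => by rw [← hf p]; rfl)]
  rw [Fintype.sum_prod_type]
  simp only [Finset.sum_const, Finset.card_univ, Fintype.card_fin, nsmul_eq_mul,
    Finset.mul_sum]
  exact Finset.sum_congr rfl fun k _ => by simp

lemma lift_dot (w z : Fin n → ℝ) :
    ((w ∘ fun x : Fin (n*t) => (finProdFinEquiv.symm x).1) ⬝ᵥ
      (z ∘ fun x : Fin (n*t) => (finProdFinEquiv.symm x).1))
      = (t : ℝ) * (w ⬝ᵥ z) := by
  have hf : ∀ p : Fin n × Fin t,
      ((finProdFinEquiv.symm (finProdFinEquiv p)).1 : Fin n) = p.1 := fun p => by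
    rw [Equiv.symm_apply_apply]
  simp only [dotProduct, Function.comp]
  rw [← Fintype.sum_equiv (finProdFinEquiv (m := n) (n := t))
    (fun p => w p.1 * z p.1) _ (fun p => by rw [hf])]
  rw [Fintype.sum_prod_type]
  simp only [Finset.sum_const, Finset.card_univ, Fintype.card_fin, nsmul_eq_mul,
    Finset.mul_sum]

/-- The `t`-blowup of a graph realizes `t·λᵢ` and `t·λⱼ` as eigenvalues at distinct
indices, for any distinct pair of indices `i ≠ j`. -/
lemma blowup_eigen (t : ℕ) (ht : 0 < t) (G : SimpleGraph (Fin n))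
    (inst : DecidableRel G.Adj) {i j : Fin n} (hij : i ≠ j) :
    ∃ (G' : SimpleGraph (Fin (n * t))) (inst' : DecidableRel G'.Adj)
      (i' j' : Fin (n * t)), i' ≠ j' ∧
      (@adjMatrix_isHermitian _ G' inst').eigenvalues i'
        = t * (@adjMatrix_isHermitian _ G inst).eigenvalues i ∧
      (@adjMatrix_isHermitian _ G' inst').eigenvalues j'
        = t * (@adjMatrix_isHermitian _ G inst).eigenvalues j := by
  letI := inst
  letI inst' : DecidableRel (G.comap (fun x : Fin (n*t) => (finProdFinEquiv.symm x).1)).Adj :=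
    fun a b => inst _ _
  set hM := adjMatrix_isHermitian G with hMdef
  set u : Fin n → ℝ := ⇑(hM.eigenvectorBasis i) with hudef
  set v : Fin n → ℝ := ⇑(hM.eigenvectorBasis j) with hvdef
  have hu : G.adjMatrix ℝ *ᵥ u = hM.eigenvalues i • u := hM.mulVec_eigenvectorBasis i
  have hv : G.adjMatrix ℝ *ᵥ v = hM.eigenvalues j • v := hM.mulVec_eigenvectorBasis j
  have hu0 : u ≠ 0 := by
    intro h0
    apply hM.eigenvectorBasis.orthonormal.ne_zero i
    ext k
    exact congrFun h0 k
  have hv0 : v ≠ 0 := by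
    intro h0
    apply hM.eigenvectorBasis.orthonormal.ne_zero j
    ext k
    exact congrFun h0 k
  have huv : u ⬝ᵥ v = 0 := by
    rw [dot_eq_inner]
    exact hM.eigenvectorBasis.orthonormal.2 hij
  -- lifted vectors
  have hU : (G.comap (fun x : Fin (n*t) => (finProdFinEquiv.symm x).1)).adjMatrix ℝ *ᵥ (u ∘ fun x : Fin (n*t) => (finProdFinEquiv.symm x).1) = ((t : ℝ) * hM.eigenvalues i) • (u ∘ fun x : Fin (n*t) => (finProdFinEquiv.symm x).1) := by
    funext x
    rw [lift_mulVec G inst u x, hu]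
    simp [mul_assoc]
  have hV : (G.comap (fun x : Fin (n*t) => (finProdFinEquiv.symm x).1)).adjMatrix ℝ *ᵥ (v ∘ fun x : Fin (n*t) => (finProdFinEquiv.symm x).1) = ((t : ℝ) * hM.eigenvalues j) • (v ∘ fun x : Fin (n*t) => (finProdFinEquiv.symm x).1) := by
    funext x
    rw [lift_mulVec G inst v x, hv]
    simp [mul_assoc]
  have hUV : (u ∘ fun x : Fin (n*t) => (finProdFinEquiv.symm x).1) ⬝ᵥ
      (v ∘ fun x : Fin (n*t) => (finProdFinEquiv.symm x).1) = 0 := by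
    rw [lift_dot, huv, mul_zero]
  have hU0 : (u ∘ fun x : Fin (n*t) => (finProdFinEquiv.symm x).1) ≠ 0 := by
    obtain ⟨k, hk⟩ := Function.ne_iff.mp hu0
    intro h0
    apply hk
    have h1 := congrFun h0 (finProdFinEquiv (k, ⟨0, ht⟩))
    simp only [Function.comp_apply, Equiv.symm_apply_apply, Pi.zero_apply] at h1
    exact h1
  have hV0 : (v ∘ fun x : Fin (n*t) => (finProdFinEquiv.symm x).1) ≠ 0 := by
    obtain ⟨k, hk⟩ := Function.ne_iff.mp hv0
    intro h0
    apply hk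
    have h1 := congrFun h0 (finProdFinEquiv (k, ⟨0, ht⟩))
    simp only [Function.comp_apply, Equiv.symm_apply_apply, Pi.zero_apply] at h1
    exact h1
  obtain ⟨i', j', hij', hi', hj'⟩ :=
    exists_pair_eigenvalues
      (@adjMatrix_isHermitian _ (G.comap (fun x : Fin (n*t) => (finProdFinEquiv.symm x).1)) inst')
      hU hV hU0 hV0 hUV
  exact ⟨G.comap (fun x : Fin (n*t) => (finProdFinEquiv.symm x).1), inst', i', j', hij', hi', hj'⟩

end Blowup

/-- if `c > 0` is such that `λ₁(G) + λ₂(G) ≤ c·n + o(n)` over all graphs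
(i.e. for every `ε > 0` there is `N` with `λ₁(G) + λ₂(G) ≤ (c+ε)·n` for all graphs on
`n ≥ N` vertices), then in fact `λ₁(G) + λ₂(G) ≤ c·n` for every graph. -/
theorem stmt7 (c : ℝ) (hc : 0 < c)
    (H : ∀ ε : ℝ, 0 < ε → ∃ N : ℕ, ∀ n : ℕ, N ≤ n →
      ∀ (G : SimpleGraph (Fin n)) (_ : DecidableRel G.Adj),
        specSum G ≤ (c + ε) * n) :
    ∀ (n : ℕ) (G : SimpleGraph (Fin n)) (_ : DecidableRel G.Adj),
      specSum G ≤ c * n := by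
  intro n G instG
  letI := instG
  refine Real.sSup_le ?_ (by positivity)
  rintro x ⟨i, j, hij, rfl⟩
  have hn : 0 < n := i.pos
  have hn' : (0 : ℝ) < n := by exact_mod_cast hn
  refine le_of_forall_pos_le_add fun ε hε => ?_
  obtain ⟨N, hN⟩ := H (ε / n) (by positivity)
  obtain ⟨G', inst', i', j', hij', hi', hj'⟩ :=
    blowup_eigen (N + 1) (Nat.succ_pos N) G instG hij
  have hbdd : BddAbove {x : ℝ | ∃ a b : Fin (n * (N + 1)), a ≠ b ∧
      x = (@adjMatrix_isHermitian _ G' inst').eigenvalues a +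
          (@adjMatrix_isHermitian _ G' inst').eigenvalues b} := by
    apply Set.Finite.bddAbove
    apply Set.Finite.subset (Set.finite_range fun p : Fin (n * (N + 1)) × Fin (n * (N + 1)) =>
      (@adjMatrix_isHermitian _ G' inst').eigenvalues p.1 +
      (@adjMatrix_isHermitian _ G' inst').eigenvalues p.2)
    rintro y ⟨a, b, -, rfl⟩
    exact ⟨(a, b), rfl⟩
  have hmem : ((N + 1 : ℕ) : ℝ) * (adjMatrix_isHermitian G).eigenvalues i
      + ((N + 1 : ℕ) : ℝ) * (adjMatrix_isHermitian G).eigenvalues j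
      ∈ {x : ℝ | ∃ a b : Fin (n * (N + 1)), a ≠ b ∧
      x = (@adjMatrix_isHermitian _ G' inst').eigenvalues a +
          (@adjMatrix_isHermitian _ G' inst').eigenvalues b} :=
    ⟨i', j', hij', by rw [hi', hj']⟩
  have h1 : ((N + 1 : ℕ) : ℝ) * (adjMatrix_isHermitian G).eigenvalues i
      + ((N + 1 : ℕ) : ℝ) * (adjMatrix_isHermitian G).eigenvalues j
      ≤ @specSum _ G' inst' := le_csSup hbdd hmem
  have h2 : @specSum _ G' inst' ≤ (c + ε / n) * (↑(n * (N + 1)) : ℝ) :=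
    hN (n * (N + 1)) (le_trans (Nat.le_succ N) (Nat.le_mul_of_pos_left (N + 1) hn)) G' inst'
  have h3 := le_trans h1 h2
  push_cast at h3
  have hT : (0 : ℝ) < (N : ℝ) + 1 := by positivity
  have hεn : ε / n * n = ε := div_mul_cancel₀ ε hn'.ne'
  have key : ((adjMatrix_isHermitian G).eigenvalues i
      + (adjMatrix_isHermitian G).eigenvalues j) * ((N : ℝ) + 1)
      ≤ (c * n + ε) * ((N : ℝ) + 1) := by
    calc ((adjMatrix_isHermitian G).eigenvalues i
        + (adjMatrix_isHermitian G).eigenvalues j) * ((N : ℝ) + 1)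
        = ((N : ℝ) + 1) * (adjMatrix_isHermitian G).eigenvalues i
          + ((N : ℝ) + 1) * (adjMatrix_isHermitian G).eigenvalues j := by ring
      _ ≤ (c + ε / n) * ((n : ℝ) * ((N : ℝ) + 1)) := h3
      _ = (c * n + ε / n * n) * ((N : ℝ) + 1) := by ring
      _ = (c * n + ε) * ((N : ℝ) + 1) := by rw [hεn]
  exact le_of_mul_le_mul_right key hT
end

section
/- Let H_6 be the graph on vertices {1,…,6} with a loop at every vertex and non-loop edges {1,2}, {1,3}, {2,3}, {2,4}, {3,4}, {3,5}, {4,5}, {4,6}, {5,6}. For any nonnegative reals u_1,…,u_6 with u_1 + ⋯ + u_6 = 1, let M* be the 6×6 symmetric matrix with entries M*_{ij} = √(u_i u_j) if i ∼ j in H_6 (including i = j) and 0 otherwise. Then λ_1(M*) + λ_2(M*) ≤ 8/7. -/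
set_option maxHeartbeats 4000000



open Matrix

/-- The adjacency matrix (including loops) of the graph `H₆` on vertices `{1,…,6}`:
a loop at every vertex and non-loop edges
`{1,2},{1,3},{2,3},{2,4},{3,4},{3,5},{4,5},{4,6},{5,6}` (1-indexed). -/
def AH6 : Matrix (Fin 6) (Fin 6) ℝ :=
  !![1,1,1,0,0,0;
     1,1,1,1,0,0;
     1,1,1,1,1,0;
     0,1,1,1,1,1;
     0,0,1,1,1,1;
     0,0,0,1,1,1]

/-- The weighted matrix `M* = D_u^{1/2} A(H₆) D_u^{1/2}`, with entries
`√(uᵢ uⱼ)` when `i ∼ j` in `H₆` (including `i = j`) and `0` otherwise. -/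
noncomputable def MstarH6 (u : Fin 6 → ℝ) : Matrix (Fin 6) (Fin 6) ℝ :=
  fun i j => Real.sqrt (u i * u j) * AH6 i j

private lemma sos_ineq (s0 s1 s2 s3 s4 s5 y01 y02 y03 y04 y05 y12 y13 y14 y15 y23 y24 y25 y34 y35 y45 : ℝ) :
    s0 * s0 * (y01 * y01) + s0 * s0 * (y02 * y02) + s0 * s0 * (y03 * y03) + s0 * s0 * (y04 * y04) + s0 * s0 * (y05 * y05) + s0 * s1 * (y02 * y12) + s0 * s1 * (y03 * y13) + s0 * s1 * (y04 * y14) + s0 * s1 * (y05 * y15) - s0 * s2 * (y01 * y12) + s0 * s2 * (y03 * y23) + s0 * s2 * (y04 * y24) + s0 * s2 * (y05 * y25) + s1 * s0 * (y12 * y02) + s1 * s0 * (y13 * y03) + s1 * s0 * (y14 * y04) + s1 * s0 * (y15 * y05) + s1 * s1 * (y01 * y01) + s1 * s1 * (y12 * y12) + s1 * s1 * (y13 * y13) + s1 * s1 * (y14 * y14) + s1 * s1 * (y15 * y15) + s1 * s2 * (y01 * y02) + s1 * s2 * (y13 * y23) + s1 * s2 * (y14 * y24) + s1 * s2 * (y15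 * y25) + s1 * s3 * (y01 * y03) - s1 * s3 * (y12 * y23) + s1 * s3 * (y14 * y34) + s1 * s3 * (y15 * y35) - s2 * s0 * (y12 * y01) + s2 * s0 * (y23 * y03) + s2 * s0 * (y24 * y04) + s2 * s0 * (y25 * y05) + s2 * s1 * (y02 * y01) + s2 * s1 * (y23 * y13) + s2 * s1 * (y24 * y14) + s2 * s1 * (y25 * y15) + s2 * s2 * (y02 * y02) + s2 * s2 * (y12 * y12) + s2 * s2 * (y23 * y23) + s2 * s2 * (y24 * y24) + s2 * s2 * (y25 * y25) + s2 * s3 * (y02 * y03) + s2 * s3 * (y12 * y13) + s2 * s3 * (y24 * y34) + s2 * s3 * (y25 * y35) + s2 * s4 * (y02 * y04) + s2 * s4 * (y12 * y14) - s2 * s4 * (y23 * y34) + s2 * s4 * (y25 * y45) + s3 * s1 * (y03 * y01) - s3 * s1 * (y23 * y12) + s3 * s1 * (y34 * y14) + s3 * s1 * (y35 * y15) + s3 * s2 * (y03 * y02) + s3 * s2 * (y13 * y12) + s3 * s2 * (y34 * y24) + s3 * s2 * (y35 * y25) + s3 * s3 * (y03 * y03) + s3 * s3 * (y13 * y13)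 + s3 * s3 * (y23 * y23) + s3 * s3 * (y34 * y34) + s3 * s3 * (y35 * y35) + s3 * s4 * (y03 * y04) + s3 * s4 * (y13 * y14) + s3 * s4 * (y23 * y24) + s3 * s4 * (y35 * y45) + s3 * s5 * (y03 * y05) + s3 * s5 * (y13 * y15) + s3 * s5 * (y23 * y25) - s3 * s5 * (y34 * y45) + s4 * s2 * (y04 * y02) + s4 * s2 * (y14 * y12) - s4 * s2 * (y34 * y23) + s4 * s2 * (y45 * y25) + s4 * s3 * (y04 * y03) + s4 * s3 * (y14 * y13) + s4 * s3 * (y24 * y23) + s4 * s3 * (y45 * y35) + s4 * s4 * (y04 * y04) + s4 * s4 * (y14 * y14) + s4 * s4 * (y24 * y24) + s4 * s4 * (y34 * y34) + s4 * s4 * (y45 * y45) + s4 * s5 * (y04 * y05) + s4 * s5 * (y14 * y15) + s4 * s5 * (y24 * y25) + s4 * s5 * (y34 * y35) + s5 * s3 * (y05 * y03) + s5 * s3 * (y15 * y13) + s5 * s3 * (y25 * y23) - s5 * s3 * (y45 * y34) + s5 * s4 * (y05 * y04) + s5 * s4 * (y15 * y14) + s5 * s4 * (y25 * y24) + s5 *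 s4 * (y35 * y34) + s5 * s5 * (y05 * y05) + s5 * s5 * (y15 * y15) + s5 * s5 * (y25 * y25) + s5 * s5 * (y35 * y35) + s5 * s5 * (y45 * y45) ≤ 8 / 7 * ((s0 * s0 + s1 * s1 + s2 * s2 + s3 * s3 + s4 * s4 + s5 * s5) * (y01 ^ 2 + y02 ^ 2 + y03 ^ 2 + y04 ^ 2 + y05 ^ 2 + y12 ^ 2 + y13 ^ 2 + y14 ^ 2 + y15 ^ 2 + y23 ^ 2 + y24 ^ 2 + y25 ^ 2 + y34 ^ 2 + y35 ^ 2 + y45 ^ 2)) := by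
  have h : 8 / 7 * ((s0 * s0 + s1 * s1 + s2 * s2 + s3 * s3 + s4 * s4 + s5 * s5) * (y01 ^ 2 + y02 ^ 2 + y03 ^ 2 + y04 ^ 2 + y05 ^ 2 + y12 ^ 2 + y13 ^ 2 + y14 ^ 2 + y15 ^ 2 + y23 ^ 2 + y24 ^ 2 + y25 ^ 2 + y34 ^ 2 + y35 ^ 2 + y45 ^ 2)) - (s0 * s0 * (y01 * y01) + s0 * s0 * (y02 * y02) + s0 * s0 * (y03 * y03) + s0 * s0 * (y04 * y04) + s0 * s0 * (y05 * y05) + s0 * s1 * (y02 * y12) + s0 * s1 * (y03 * y13) + s0 * s1 * (y04 * y14) + s0 * s1 * (y05 * y15) - s0 * s2 * (y01 * y12) + s0 * s2 * (y03 * y23) + s0 * s2 * (y04 * y24) + s0 * s2 * (y05 * y25) + s1 * s0 * (y12 * y02) + s1 * s0 * (y13 * y03) + s1 * s0 * (y14 * y04) + s1 * s0 * (y15 * y05) + s1 * s1 * (y01 * y01) + s1 * s1 * (y12 * y12) + s1 * s1 * (y13 * y13) + s1 * s1 * (y14 * y14) + s1 * s1 * (y15 * y15) + s1 * s2 * (y01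 * y02) + s1 * s2 * (y13 * y23) + s1 * s2 * (y14 * y24) + s1 * s2 * (y15 * y25) + s1 * s3 * (y01 * y03) - s1 * s3 * (y12 * y23) + s1 * s3 * (y14 * y34) + s1 * s3 * (y15 * y35) - s2 * s0 * (y12 * y01) + s2 * s0 * (y23 * y03) + s2 * s0 * (y24 * y04) + s2 * s0 * (y25 * y05) + s2 * s1 * (y02 * y01) + s2 * s1 * (y23 * y13) + s2 * s1 * (y24 * y14) + s2 * s1 * (y25 * y15) + s2 * s2 * (y02 * y02) + s2 * s2 * (y12 * y12) + s2 * s2 * (y23 * y23) + s2 * s2 * (y24 * y24) + s2 * s2 * (y25 * y25) + s2 * s3 * (y02 * y03) + s2 * s3 * (y12 * y13) + s2 * s3 * (y24 * y34) + s2 * s3 * (y25 * y35) + s2 * s4 * (y02 * y04) + s2 * s4 * (y12 * y14) - s2 * s4 * (y23 * y34) + s2 * s4 * (y25 * y45) + s3 * s1 * (y03 * y01) - s3 * s1 * (y23 * y12) + s3 * s1 * (y34 * y14) + s3 * s1 * (y35 * y15) + s3 * s2 * (y03 * y02) + s3 * s2 * (y13 * y12) + s3 * s2 * (y34 * y24)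 + s3 * s2 * (y35 * y25) + s3 * s3 * (y03 * y03) + s3 * s3 * (y13 * y13) + s3 * s3 * (y23 * y23) + s3 * s3 * (y34 * y34) + s3 * s3 * (y35 * y35) + s3 * s4 * (y03 * y04) + s3 * s4 * (y13 * y14) + s3 * s4 * (y23 * y24) + s3 * s4 * (y35 * y45) + s3 * s5 * (y03 * y05) + s3 * s5 * (y13 * y15) + s3 * s5 * (y23 * y25) - s3 * s5 * (y34 * y45) + s4 * s2 * (y04 * y02) + s4 * s2 * (y14 * y12) - s4 * s2 * (y34 * y23) + s4 * s2 * (y45 * y25) + s4 * s3 * (y04 * y03) + s4 * s3 * (y14 * y13) + s4 * s3 * (y24 * y23) + s4 * s3 * (y45 * y35) + s4 * s4 * (y04 * y04) + s4 * s4 * (y14 * y14) + s4 * s4 * (y24 * y24) + s4 * s4 * (y34 * y34) + s4 * s4 * (y45 * y45) + s4 * s5 * (y04 * y05) + s4 * s5 * (y14 * y15) + s4 * s5 * (y24 * y25) + s4 * s5 * (y34 * y35) + s5 * s3 * (y05 * y03) + s5 * s3 * (y15 * y13) + s5 * s3 * (y25 * y23) - s5 * s3 * (y45 * y34) + s5 *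 s4 * (y05 * y04) + s5 * s4 * (y15 * y14) + s5 * s4 * (y25 * y24) + s5 * s4 * (y35 * y34) + s5 * s5 * (y05 * y05) + s5 * s5 * (y15 * y15) + s5 * s5 * (y25 * y25) + s5 * s5 * (y35 * y35) + s5 * s5 * (y45 * y45)) = (1 / 7 : ℝ) * (s0 * y01 - s2 * y12 - s3 * y13 + s4 * y14 + s5 * y15) ^ 2 + (1 / 7 : ℝ) * (s0 * y02 + s1 * y12 - s3 * y23 - s4 * y24 + s5 * y25) ^ 2 + (1 / 7 : ℝ) * (s0 * y03 - s1 * y13 - s2 * y23 + s4 * y34 + s5 * y35) ^ 2 + (1 / 7 : ℝ) * (s0 * y04 + s1 * y14 - s2 * y24 - s3 * y34 + s5 * y45) ^ 2 + (1 / 7 : ℝ) * (s0 * y05 - (1 / 2 : ℝ) * s1 * y15 - (1 / 2 : ℝ) * s2 * y25 + (1 / 2 : ℝ) * s3 * y35 + (1 / 2 : ℝ) * s4 * y45) ^ 2 + (3 / 28 : ℝ) * (s1 * y15 + s2 * y25 - s3 * y35 - s4 * y45) ^ 2 + (8 / 7 : ℝ) * (s0 * y12 - s1 * y02 + s2 *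 y01) ^ 2 + (8 / 7 : ℝ) * (s0 * y13 - (3 / 4 : ℝ) * s1 * y03 + (1 / 8 : ℝ) * s3 * y01) ^ 2 + (9 / 8 : ℝ) * (- (2 / 3 : ℝ) * s1 * y03 + s3 * y01) ^ 2 + (8 / 7 : ℝ) * (s0 * y14 - s1 * y04 - (1 / 8 : ℝ) * s4 * y01) ^ 2 + (9 / 8 : ℝ) * (s4 * y01) ^ 2 + (8 / 7 : ℝ) * (s0 * y15 - (13 / 16 : ℝ) * s1 * y05 - (1 / 8 : ℝ) * s5 * y01) ^ 2 + (9 / 8 : ℝ) * (- (1 / 6 : ℝ) * s1 * y05 + s5 * y01) ^ 2 + (5 / 14 : ℝ) * (s1 * y05) ^ 2 + (8 / 7 : ℝ) * (s0 * y23 - (3 / 4 : ℝ) * s2 * y03 + (1 / 8 : ℝ) * s3 * y02) ^ 2 + (9 / 8 : ℝ) * (- (2 / 3 : ℝ) * s2 * y03 + s3 * y02) ^ 2 + (8 / 7 : ℝ) * (s0 * y24 - (3 / 4 : ℝ) * s2 * y04 + (1 / 8 : ℝ) * s4 * y02) ^ 2 + (9 / 8 : ℝ) * (- (2 / 3 :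 ℝ) * s2 * y04 + s4 * y02) ^ 2 + (8 / 7 : ℝ) * (s0 * y25 - (13 / 16 : ℝ) * s2 * y05 - (1 / 8 : ℝ) * s5 * y02) ^ 2 + (9 / 8 : ℝ) * (- (1 / 6 : ℝ) * s2 * y05 + s5 * y02) ^ 2 + (5 / 14 : ℝ) * (s2 * y05) ^ 2 + (8 / 7 : ℝ) * (s0 * y34 + (1 / 8 : ℝ) * s3 * y04 - (1 / 8 : ℝ) * s4 * y03) ^ 2 + (9 / 8 : ℝ) * (s3 * y04 - s4 * y03) ^ 2 + (8 / 7 : ℝ) * (s0 * y35 - (1 / 16 : ℝ) * s3 * y05 - (1 / 8 : ℝ) * s5 * y03) ^ 2 + (255 / 224 : ℝ) * (s3 * y05 - (14 / 17 : ℝ) * s5 * y03) ^ 2 + (6 / 17 : ℝ) * (s5 * y03) ^ 2 + (8 / 7 : ℝ) * (s0 * y45 - (1 / 16 : ℝ) * s4 * y05 - (1 / 8 : ℝ) * s5 * y04) ^ 2 + (255 / 224 : ℝ) * (s4 * y05 - (14 / 17 : ℝ) * s5 * y04) ^ 2 + (6 / 17 : ℝ) * (s5 * y04) ^ 2 + (1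 / 7 : ℝ) * (s1 * y01 + s2 * y02 - s3 * y03 - s4 * y04 + (1 / 2 : ℝ) * s5 * y05) ^ 2 + (3 / 28 : ℝ) * (s5 * y05) ^ 2 + (8 / 7 : ℝ) * (s1 * y23 - s2 * y13 + s3 * y12) ^ 2 + (8 / 7 : ℝ) * (s1 * y24 - (3 / 4 : ℝ) * s2 * y14 + (1 / 8 : ℝ) * s4 * y12) ^ 2 + (9 / 8 : ℝ) * (- (2 / 3 : ℝ) * s2 * y14 + s4 * y12) ^ 2 + (8 / 7 : ℝ) * (s1 * y25 - s2 * y15 - (1 / 8 : ℝ) * s5 * y12) ^ 2 + (9 / 8 : ℝ) * (s5 * y12) ^ 2 + (8 / 7 : ℝ) * (s1 * y34 - (3 / 4 : ℝ) * s3 * y14 + (1 / 8 : ℝ) * s4 * y13) ^ 2 + (9 / 8 : ℝ) * (- (2 / 3 : ℝ) * s3 * y14 + s4 * y13) ^ 2 + (8 / 7 : ℝ) * (s1 * y35 - (3 / 4 : ℝ) * s3 * y15 + (1 / 8 : ℝ) * s5 * y13) ^ 2 + (9 / 8 : ℝ) * (- (2 / 3 : ℝ) * s3 * y15 + s5 *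 y13) ^ 2 + (8 / 7 : ℝ) * (s1 * y45 + (1 / 8 : ℝ) * s4 * y15 - (1 / 8 : ℝ) * s5 * y14) ^ 2 + (9 / 8 : ℝ) * (s4 * y15 - s5 * y14) ^ 2 + (8 / 7 : ℝ) * (s2 * y34 - s3 * y24 + s4 * y23) ^ 2 + (8 / 7 : ℝ) * (s2 * y35 - (3 / 4 : ℝ) * s3 * y25 + (1 / 8 : ℝ) * s5 * y23) ^ 2 + (9 / 8 : ℝ) * (- (2 / 3 : ℝ) * s3 * y25 + s5 * y23) ^ 2 + (8 / 7 : ℝ) * (s2 * y45 - (3 / 4 : ℝ) * s4 * y25 + (1 / 8 : ℝ) * s5 * y24) ^ 2 + (9 / 8 : ℝ) * (- (2 / 3 : ℝ) * s4 * y25 + s5 * y24) ^ 2 + (8 / 7 : ℝ) * (s3 * y45 - s4 * y35 + s5 * y34) ^ 2 := by ring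
  have h2 : (0:ℝ) ≤ (1 / 7 : ℝ) * (s0 * y01 - s2 * y12 - s3 * y13 + s4 * y14 + s5 * y15) ^ 2 + (1 / 7 : ℝ) * (s0 * y02 + s1 * y12 - s3 * y23 - s4 * y24 + s5 * y25) ^ 2 + (1 / 7 : ℝ) * (s0 * y03 - s1 * y13 - s2 * y23 + s4 * y34 + s5 * y35) ^ 2 + (1 / 7 : ℝ) * (s0 * y04 + s1 * y14 - s2 * y24 - s3 * y34 + s5 * y45) ^ 2 + (1 / 7 : ℝ) * (s0 * y05 - (1 / 2 : ℝ) * s1 * y15 - (1 / 2 : ℝ) * s2 * y25 + (1 / 2 : ℝ) * s3 * y35 + (1 / 2 : ℝ) * s4 * y45) ^ 2 + (3 / 28 : ℝ) * (s1 * y15 + s2 * y25 - s3 * y35 - s4 * y45) ^ 2 + (8 / 7 : ℝ) * (s0 * y12 - s1 * y02 + s2 * y01) ^ 2 + (8 / 7 : ℝ) * (s0 * y13 - (3 / 4 : ℝ) * s1 * y03 + (1 / 8 : ℝ) * s3 * y01) ^ 2 + (9 / 8 : ℝ) * (- (2 / 3 : ℝ) * s1 * y03 + s3 * y01) ^ 2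 + (8 / 7 : ℝ) * (s0 * y14 - s1 * y04 - (1 / 8 : ℝ) * s4 * y01) ^ 2 + (9 / 8 : ℝ) * (s4 * y01) ^ 2 + (8 / 7 : ℝ) * (s0 * y15 - (13 / 16 : ℝ) * s1 * y05 - (1 / 8 : ℝ) * s5 * y01) ^ 2 + (9 / 8 : ℝ) * (- (1 / 6 : ℝ) * s1 * y05 + s5 * y01) ^ 2 + (5 / 14 : ℝ) * (s1 * y05) ^ 2 + (8 / 7 : ℝ) * (s0 * y23 - (3 / 4 : ℝ) * s2 * y03 + (1 / 8 : ℝ) * s3 * y02) ^ 2 + (9 / 8 : ℝ) * (- (2 / 3 : ℝ) * s2 * y03 + s3 * y02) ^ 2 + (8 / 7 : ℝ) * (s0 * y24 - (3 / 4 : ℝ) * s2 * y04 + (1 / 8 : ℝ) * s4 * y02) ^ 2 + (9 / 8 : ℝ) * (- (2 / 3 : ℝ) * s2 * y04 + s4 * y02) ^ 2 + (8 / 7 : ℝ) * (s0 * y25 - (13 / 16 : ℝ) * s2 * y05 - (1 / 8 : ℝ) * s5 * y02) ^ 2 + (9 / 8 : ℝ) * (- (1 / 6 : ℝ) * s2 *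 y05 + s5 * y02) ^ 2 + (5 / 14 : ℝ) * (s2 * y05) ^ 2 + (8 / 7 : ℝ) * (s0 * y34 + (1 / 8 : ℝ) * s3 * y04 - (1 / 8 : ℝ) * s4 * y03) ^ 2 + (9 / 8 : ℝ) * (s3 * y04 - s4 * y03) ^ 2 + (8 / 7 : ℝ) * (s0 * y35 - (1 / 16 : ℝ) * s3 * y05 - (1 / 8 : ℝ) * s5 * y03) ^ 2 + (255 / 224 : ℝ) * (s3 * y05 - (14 / 17 : ℝ) * s5 * y03) ^ 2 + (6 / 17 : ℝ) * (s5 * y03) ^ 2 + (8 / 7 : ℝ) * (s0 * y45 - (1 / 16 : ℝ) * s4 * y05 - (1 / 8 : ℝ) * s5 * y04) ^ 2 + (255 / 224 : ℝ) * (s4 * y05 - (14 / 17 : ℝ) * s5 * y04) ^ 2 + (6 / 17 : ℝ) * (s5 * y04) ^ 2 + (1 / 7 : ℝ) * (s1 * y01 + s2 * y02 - s3 * y03 - s4 * y04 + (1 / 2 : ℝ) * s5 * y05) ^ 2 + (3 / 28 : ℝ) * (s5 * y05) ^ 2 + (8 / 7 : ℝ) * (s1 * y23 - s2 * y13 + s3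 * y12) ^ 2 + (8 / 7 : ℝ) * (s1 * y24 - (3 / 4 : ℝ) * s2 * y14 + (1 / 8 : ℝ) * s4 * y12) ^ 2 + (9 / 8 : ℝ) * (- (2 / 3 : ℝ) * s2 * y14 + s4 * y12) ^ 2 + (8 / 7 : ℝ) * (s1 * y25 - s2 * y15 - (1 / 8 : ℝ) * s5 * y12) ^ 2 + (9 / 8 : ℝ) * (s5 * y12) ^ 2 + (8 / 7 : ℝ) * (s1 * y34 - (3 / 4 : ℝ) * s3 * y14 + (1 / 8 : ℝ) * s4 * y13) ^ 2 + (9 / 8 : ℝ) * (- (2 / 3 : ℝ) * s3 * y14 + s4 * y13) ^ 2 + (8 / 7 : ℝ) * (s1 * y35 - (3 / 4 : ℝ) * s3 * y15 + (1 / 8 : ℝ) * s5 * y13) ^ 2 + (9 / 8 : ℝ) * (- (2 / 3 : ℝ) * s3 * y15 + s5 * y13) ^ 2 + (8 / 7 : ℝ) * (s1 * y45 + (1 / 8 : ℝ) * s4 * y15 - (1 / 8 : ℝ) * s5 * y14) ^ 2 + (9 / 8 : ℝ) * (s4 * y15 - s5 * y14) ^ 2 + (8 / 7 : ℝ) * (s2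 * y34 - s3 * y24 + s4 * y23) ^ 2 + (8 / 7 : ℝ) * (s2 * y35 - (3 / 4 : ℝ) * s3 * y25 + (1 / 8 : ℝ) * s5 * y23) ^ 2 + (9 / 8 : ℝ) * (- (2 / 3 : ℝ) * s3 * y25 + s5 * y23) ^ 2 + (8 / 7 : ℝ) * (s2 * y45 - (3 / 4 : ℝ) * s4 * y25 + (1 / 8 : ℝ) * s5 * y24) ^ 2 + (9 / 8 : ℝ) * (- (2 / 3 : ℝ) * s4 * y25 + s5 * y24) ^ 2 + (8 / 7 : ℝ) * (s3 * y45 - s4 * y35 + s5 * y34) ^ 2 := by positivity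
  linarith

private lemma core (s0 s1 s2 s3 s4 s5 v0 v1 v2 v3 v4 v5 w0 w1 w2 w3 w4 w5 lam mu : ℝ)
    (hs : s0 * s0 + s1 * s1 + s2 * s2 + s3 * s3 + s4 * s4 + s5 * s5 = 1)
    (hv2 : v0 * v0 + v1 * v1 + v2 * v2 + v3 * v3 + v4 * v4 + v5 * v5 = 1)
    (hw2 : w0 * w0 + w1 * w1 + w2 * w2 + w3 * w3 + w4 * w4 + w5 * w5 = 1)
    (hvw : v0 * w0 + v1 * w1 + v2 * w2 + v3 * w3 + v4 * w4 + v5 * w5 = 0)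
    (hl : lam = s0 * s0 * (v0 * v0) + s0 * s1 * (v0 * v1) + s0 * s2 * (v0 * v2) + s1 * s0 * (v1 * v0) + s1 * s1 * (v1 * v1) + s1 * s2 * (v1 * v2) + s1 * s3 * (v1 * v3) + s2 * s0 * (v2 * v0) + s2 * s1 * (v2 * v1) + s2 * s2 * (v2 * v2) + s2 * s3 * (v2 * v3) + s2 * s4 * (v2 * v4) + s3 * s1 * (v3 * v1) + s3 * s2 * (v3 * v2) + s3 * s3 * (v3 * v3) + s3 * s4 * (v3 * v4) + s3 * s5 * (v3 * v5) + s4 * s2 * (v4 * v2) + s4 * s3 * (v4 * v3) + s4 * s4 * (v4 * v4) + s4 * s5 * (v4 * v5) + s5 * s3 * (v5 * v3) + s5 * s4 * (v5 * v4) + s5 * s5 * (v5 * v5))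
    (hm : mu = s0 * s0 * (w0 * w0) + s0 * s1 * (w0 * w1) + s0 * s2 * (w0 * w2) + s1 * s0 * (w1 * w0) + s1 * s1 * (w1 * w1) + s1 * s2 * (w1 * w2) + s1 * s3 * (w1 * w3) + s2 * s0 * (w2 * w0) + s2 * s1 * (w2 * w1) + s2 * s2 * (w2 * w2) + s2 * s3 * (w2 * w3) + s2 * s4 * (w2 * w4) + s3 * s1 * (w3 * w1) + s3 * s2 * (w3 * w2) + s3 * s3 * (w3 * w3) + s3 * s4 * (w3 * w4) + s3 * s5 * (w3 * w5) + s4 * s2 * (w4 * w2) + s4 * s3 * (w4 * w3) + s4 * s4 * (w4 * w4) + s4 * s5 * (w4 * w5) + s5 * s3 * (w5 * w3) + s5 * s4 * (w5 * w4) + s5 * s5 * (w5 * w5)) :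
    lam + mu ≤ 8 / 7 := by
  have main := sos_ineq s0 s1 s2 s3 s4 s5 (v0 * w1 - v1 * w0) (v0 * w2 - v2 * w0) (v0 * w3 - v3 * w0) (v0 * w4 - v4 * w0) (v0 * w5 - v5 * w0) (v1 * w2 - v2 * w1) (v1 * w3 - v3 * w1) (v1 * w4 - v4 * w1) (v1 * w5 - v5 * w1) (v2 * w3 - v3 * w2) (v2 * w4 - v4 * w2) (v2 * w5 - v5 * w2) (v3 * w4 - v4 * w3) (v3 * w5 - v5 * w3) (v4 * w5 - v5 * w4)
  have key1 : (s0 * s0 * (v0 * v0) + s0 * s1 * (v0 * v1) + s0 * s2 * (v0 * v2) + s1 * s0 * (v1 * v0) + s1 * s1 * (v1 * v1) + s1 * s2 * (v1 * v2) + s1 * s3 * (v1 * v3) + s2 * s0 * (v2 * v0) + s2 * s1 * (v2 * v1) + s2 * s2 * (v2 * v2) + s2 * s3 * (v2 * v3) + s2 * s4 * (v2 * v4) + s3 * s1 * (v3 * v1) + s3 * s2 * (v3 * v2) + s3 * s3 * (v3 * v3) + s3 * s4 * (v3 * v4) + s3 * s5 * (v3 * v5) + s4 * s2 * (v4 * v2)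 + s4 * s3 * (v4 * v3) + s4 * s4 * (v4 * v4) + s4 * s5 * (v4 * v5) + s5 * s3 * (v5 * v3) + s5 * s4 * (v5 * v4) + s5 * s5 * (v5 * v5)) + (s0 * s0 * (w0 * w0) + s0 * s1 * (w0 * w1) + s0 * s2 * (w0 * w2) + s1 * s0 * (w1 * w0) + s1 * s1 * (w1 * w1) + s1 * s2 * (w1 * w2) + s1 * s3 * (w1 * w3) + s2 * s0 * (w2 * w0) + s2 * s1 * (w2 * w1) + s2 * s2 * (w2 * w2) + s2 * s3 * (w2 * w3) + s2 * s4 * (w2 * w4) + s3 * s1 * (w3 * w1) + s3 * s2 * (w3 * w2) + s3 * s3 * (w3 * w3) + s3 * s4 * (w3 * w4) + s3 * s5 * (w3 * w5) + s4 * s2 * (w4 * w2) + s4 * s3 * (w4 * w3) + s4 * s4 * (w4 * w4) + s4 * s5 * (w4 * w5) + s5 * s3 * (w5 * w3) + s5 * s4 * (w5 * w4) + s5 * s5 * (w5 * w5)) = s0 * s0 * ((v0 * w1 - v1 * w0) * (v0 * w1 - v1 * w0)) + s0 * s0 * ((v0 * w2 - v2 * w0) * (v0 * w2 - v2 * w0))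 + s0 * s0 * ((v0 * w3 - v3 * w0) * (v0 * w3 - v3 * w0)) + s0 * s0 * ((v0 * w4 - v4 * w0) * (v0 * w4 - v4 * w0)) + s0 * s0 * ((v0 * w5 - v5 * w0) * (v0 * w5 - v5 * w0)) + s0 * s1 * ((v0 * w2 - v2 * w0) * (v1 * w2 - v2 * w1)) + s0 * s1 * ((v0 * w3 - v3 * w0) * (v1 * w3 - v3 * w1)) + s0 * s1 * ((v0 * w4 - v4 * w0) * (v1 * w4 - v4 * w1)) + s0 * s1 * ((v0 * w5 - v5 * w0) * (v1 * w5 - v5 * w1)) - s0 * s2 * ((v0 * w1 - v1 * w0) * (v1 * w2 - v2 * w1)) + s0 * s2 * ((v0 * w3 - v3 * w0) * (v2 * w3 - v3 * w2)) + s0 * s2 * ((v0 * w4 - v4 * w0) * (v2 * w4 - v4 * w2)) + s0 * s2 * ((v0 * w5 - v5 * w0) * (v2 * w5 - v5 * w2)) + s1 * s0 * ((v1 * w2 - v2 * w1) * (v0 * w2 - v2 * w0)) + s1 * s0 * ((v1 * w3 - v3 * w1) * (v0 * w3 - v3 * w0)) + s1 * s0 * ((v1 * w4 - v4 * w1) *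 (v0 * w4 - v4 * w0)) + s1 * s0 * ((v1 * w5 - v5 * w1) * (v0 * w5 - v5 * w0)) + s1 * s1 * ((v0 * w1 - v1 * w0) * (v0 * w1 - v1 * w0)) + s1 * s1 * ((v1 * w2 - v2 * w1) * (v1 * w2 - v2 * w1)) + s1 * s1 * ((v1 * w3 - v3 * w1) * (v1 * w3 - v3 * w1)) + s1 * s1 * ((v1 * w4 - v4 * w1) * (v1 * w4 - v4 * w1)) + s1 * s1 * ((v1 * w5 - v5 * w1) * (v1 * w5 - v5 * w1)) + s1 * s2 * ((v0 * w1 - v1 * w0) * (v0 * w2 - v2 * w0)) + s1 * s2 * ((v1 * w3 - v3 * w1) * (v2 * w3 - v3 * w2)) + s1 * s2 * ((v1 * w4 - v4 * w1) * (v2 * w4 - v4 * w2)) + s1 * s2 * ((v1 * w5 - v5 * w1) * (v2 * w5 - v5 * w2)) + s1 * s3 * ((v0 * w1 - v1 * w0) * (v0 * w3 - v3 * w0)) - s1 * s3 * ((v1 * w2 - v2 * w1) * (v2 * w3 - v3 * w2)) + s1 * s3 * ((v1 * w4 - v4 * w1) * (v3 * w4 - v4 * w3)) + s1 * s3 * ((v1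 * w5 - v5 * w1) * (v3 * w5 - v5 * w3)) - s2 * s0 * ((v1 * w2 - v2 * w1) * (v0 * w1 - v1 * w0)) + s2 * s0 * ((v2 * w3 - v3 * w2) * (v0 * w3 - v3 * w0)) + s2 * s0 * ((v2 * w4 - v4 * w2) * (v0 * w4 - v4 * w0)) + s2 * s0 * ((v2 * w5 - v5 * w2) * (v0 * w5 - v5 * w0)) + s2 * s1 * ((v0 * w2 - v2 * w0) * (v0 * w1 - v1 * w0)) + s2 * s1 * ((v2 * w3 - v3 * w2) * (v1 * w3 - v3 * w1)) + s2 * s1 * ((v2 * w4 - v4 * w2) * (v1 * w4 - v4 * w1)) + s2 * s1 * ((v2 * w5 - v5 * w2) * (v1 * w5 - v5 * w1)) + s2 * s2 * ((v0 * w2 - v2 * w0) * (v0 * w2 - v2 * w0)) + s2 * s2 * ((v1 * w2 - v2 * w1) * (v1 * w2 - v2 * w1)) + s2 * s2 * ((v2 * w3 - v3 * w2) * (v2 * w3 - v3 * w2)) + s2 * s2 * ((v2 * w4 - v4 * w2) * (v2 * w4 - v4 * w2)) + s2 * s2 * ((v2 * w5 - v5 * w2) * (v2 * w5 - v5 * w2))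 + s2 * s3 * ((v0 * w2 - v2 * w0) * (v0 * w3 - v3 * w0)) + s2 * s3 * ((v1 * w2 - v2 * w1) * (v1 * w3 - v3 * w1)) + s2 * s3 * ((v2 * w4 - v4 * w2) * (v3 * w4 - v4 * w3)) + s2 * s3 * ((v2 * w5 - v5 * w2) * (v3 * w5 - v5 * w3)) + s2 * s4 * ((v0 * w2 - v2 * w0) * (v0 * w4 - v4 * w0)) + s2 * s4 * ((v1 * w2 - v2 * w1) * (v1 * w4 - v4 * w1)) - s2 * s4 * ((v2 * w3 - v3 * w2) * (v3 * w4 - v4 * w3)) + s2 * s4 * ((v2 * w5 - v5 * w2) * (v4 * w5 - v5 * w4)) + s3 * s1 * ((v0 * w3 - v3 * w0) * (v0 * w1 - v1 * w0)) - s3 * s1 * ((v2 * w3 - v3 * w2) * (v1 * w2 - v2 * w1)) + s3 * s1 * ((v3 * w4 - v4 * w3) * (v1 * w4 - v4 * w1)) + s3 * s1 * ((v3 * w5 - v5 * w3) * (v1 * w5 - v5 * w1)) + s3 * s2 * ((v0 * w3 - v3 * w0) * (v0 * w2 - v2 * w0)) + s3 * s2 * ((v1 * w3 - v3 * w1) *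 (v1 * w2 - v2 * w1)) + s3 * s2 * ((v3 * w4 - v4 * w3) * (v2 * w4 - v4 * w2)) + s3 * s2 * ((v3 * w5 - v5 * w3) * (v2 * w5 - v5 * w2)) + s3 * s3 * ((v0 * w3 - v3 * w0) * (v0 * w3 - v3 * w0)) + s3 * s3 * ((v1 * w3 - v3 * w1) * (v1 * w3 - v3 * w1)) + s3 * s3 * ((v2 * w3 - v3 * w2) * (v2 * w3 - v3 * w2)) + s3 * s3 * ((v3 * w4 - v4 * w3) * (v3 * w4 - v4 * w3)) + s3 * s3 * ((v3 * w5 - v5 * w3) * (v3 * w5 - v5 * w3)) + s3 * s4 * ((v0 * w3 - v3 * w0) * (v0 * w4 - v4 * w0)) + s3 * s4 * ((v1 * w3 - v3 * w1) * (v1 * w4 - v4 * w1)) + s3 * s4 * ((v2 * w3 - v3 * w2) * (v2 * w4 - v4 * w2)) + s3 * s4 * ((v3 * w5 - v5 * w3) * (v4 * w5 - v5 * w4)) + s3 * s5 * ((v0 * w3 - v3 * w0) * (v0 * w5 - v5 * w0)) + s3 * s5 * ((v1 * w3 - v3 * w1) * (v1 * w5 - v5 * w1)) + s3 * s5 * ((v2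 * w3 - v3 * w2) * (v2 * w5 - v5 * w2)) - s3 * s5 * ((v3 * w4 - v4 * w3) * (v4 * w5 - v5 * w4)) + s4 * s2 * ((v0 * w4 - v4 * w0) * (v0 * w2 - v2 * w0)) + s4 * s2 * ((v1 * w4 - v4 * w1) * (v1 * w2 - v2 * w1)) - s4 * s2 * ((v3 * w4 - v4 * w3) * (v2 * w3 - v3 * w2)) + s4 * s2 * ((v4 * w5 - v5 * w4) * (v2 * w5 - v5 * w2)) + s4 * s3 * ((v0 * w4 - v4 * w0) * (v0 * w3 - v3 * w0)) + s4 * s3 * ((v1 * w4 - v4 * w1) * (v1 * w3 - v3 * w1)) + s4 * s3 * ((v2 * w4 - v4 * w2) * (v2 * w3 - v3 * w2)) + s4 * s3 * ((v4 * w5 - v5 * w4) * (v3 * w5 - v5 * w3)) + s4 * s4 * ((v0 * w4 - v4 * w0) * (v0 * w4 - v4 * w0)) + s4 * s4 * ((v1 * w4 - v4 * w1) * (v1 * w4 - v4 * w1)) + s4 * s4 * ((v2 * w4 - v4 * w2) * (v2 * w4 - v4 * w2)) + s4 * s4 * ((v3 * w4 - v4 * w3) * (v3 * w4 - v4 * w3))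 + s4 * s4 * ((v4 * w5 - v5 * w4) * (v4 * w5 - v5 * w4)) + s4 * s5 * ((v0 * w4 - v4 * w0) * (v0 * w5 - v5 * w0)) + s4 * s5 * ((v1 * w4 - v4 * w1) * (v1 * w5 - v5 * w1)) + s4 * s5 * ((v2 * w4 - v4 * w2) * (v2 * w5 - v5 * w2)) + s4 * s5 * ((v3 * w4 - v4 * w3) * (v3 * w5 - v5 * w3)) + s5 * s3 * ((v0 * w5 - v5 * w0) * (v0 * w3 - v3 * w0)) + s5 * s3 * ((v1 * w5 - v5 * w1) * (v1 * w3 - v3 * w1)) + s5 * s3 * ((v2 * w5 - v5 * w2) * (v2 * w3 - v3 * w2)) - s5 * s3 * ((v4 * w5 - v5 * w4) * (v3 * w4 - v4 * w3)) + s5 * s4 * ((v0 * w5 - v5 * w0) * (v0 * w4 - v4 * w0)) + s5 * s4 * ((v1 * w5 - v5 * w1) * (v1 * w4 - v4 * w1)) + s5 * s4 * ((v2 * w5 - v5 * w2) * (v2 * w4 - v4 * w2)) + s5 * s4 * ((v3 * w5 - v5 * w3) * (v3 * w4 - v4 * w3)) + s5 * s5 * ((v0 * w5 - v5 * w0) *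 (v0 * w5 - v5 * w0)) + s5 * s5 * ((v1 * w5 - v5 * w1) * (v1 * w5 - v5 * w1)) + s5 * s5 * ((v2 * w5 - v5 * w2) * (v2 * w5 - v5 * w2)) + s5 * s5 * ((v3 * w5 - v5 * w3) * (v3 * w5 - v5 * w3)) + s5 * s5 * ((v4 * w5 - v5 * w4) * (v4 * w5 - v5 * w4)) := by
    linear_combination (-(s0 * s0 * (v0 * v0) + s0 * s1 * (v0 * v1) + s0 * s2 * (v0 * v2) + s1 * s0 * (v1 * v0) + s1 * s1 * (v1 * v1) + s1 * s2 * (v1 * v2) + s1 * s3 * (v1 * v3) + s2 * s0 * (v2 * v0) + s2 * s1 * (v2 * v1) + s2 * s2 * (v2 * v2) + s2 * s3 * (v2 * v3) + s2 * s4 * (v2 * v4) + s3 * s1 * (v3 * v1) + s3 * s2 * (v3 * v2) + s3 * s3 * (v3 * v3) + s3 * s4 * (v3 * v4) + s3 * s5 * (v3 * v5) + s4 * s2 * (v4 * v2) + s4 * s3 * (v4 * v3) + s4 * s4 * (v4 * v4) + s4 * s5 * (v4 * v5) + s5 * s3 * (v5 * v3) + s5 * s4 * (v5 * v4) + s5 *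 s5 * (v5 * v5))) * hw2 + (-(s0 * s0 * (w0 * w0) + s0 * s1 * (w0 * w1) + s0 * s2 * (w0 * w2) + s1 * s0 * (w1 * w0) + s1 * s1 * (w1 * w1) + s1 * s2 * (w1 * w2) + s1 * s3 * (w1 * w3) + s2 * s0 * (w2 * w0) + s2 * s1 * (w2 * w1) + s2 * s2 * (w2 * w2) + s2 * s3 * (w2 * w3) + s2 * s4 * (w2 * w4) + s3 * s1 * (w3 * w1) + s3 * s2 * (w3 * w2) + s3 * s3 * (w3 * w3) + s3 * s4 * (w3 * w4) + s3 * s5 * (w3 * w5) + s4 * s2 * (w4 * w2) + s4 * s3 * (w4 * w3) + s4 * s4 * (w4 * w4) + s4 * s5 * (w4 * w5) + s5 * s3 * (w5 * w3) + s5 * s4 * (w5 * w4) + s5 * s5 * (w5 * w5))) * hv2 + (2 * (s0 * s0 * (v0 * w0) + s0 * s1 * (v0 * w1) + s0 * s2 * (v0 * w2) + s1 * s0 * (v1 * w0) + s1 * s1 * (v1 * w1) + s1 * s2 * (v1 * w2) + s1 * s3 * (v1 * w3) + s2 * s0 * (v2 * w0) + s2 * s1 * (v2 * w1) + s2 * s2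 * (v2 * w2) + s2 * s3 * (v2 * w3) + s2 * s4 * (v2 * w4) + s3 * s1 * (v3 * w1) + s3 * s2 * (v3 * w2) + s3 * s3 * (v3 * w3) + s3 * s4 * (v3 * w4) + s3 * s5 * (v3 * w5) + s4 * s2 * (v4 * w2) + s4 * s3 * (v4 * w3) + s4 * s4 * (v4 * w4) + s4 * s5 * (v4 * w5) + s5 * s3 * (v5 * w3) + s5 * s4 * (v5 * w4) + s5 * s5 * (v5 * w5))) * hvw
  have key2 : (v0 * w1 - v1 * w0) ^ 2 + (v0 * w2 - v2 * w0) ^ 2 + (v0 * w3 - v3 * w0) ^ 2 + (v0 * w4 - v4 * w0) ^ 2 + (v0 * w5 - v5 * w0) ^ 2 + (v1 * w2 - v2 * w1) ^ 2 + (v1 * w3 - v3 * w1) ^ 2 + (v1 * w4 - v4 * w1) ^ 2 + (v1 * w5 - v5 * w1) ^ 2 + (v2 * w3 - v3 * w2) ^ 2 + (v2 * w4 - v4 * w2) ^ 2 + (v2 * w5 - v5 * w2) ^ 2 + (v3 * w4 - v4 * w3) ^ 2 + (v3 * w5 - v5 * w3) ^ 2 + (v4 * w5 - v5 * w4) ^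 2 = 1 := by
    linear_combination (w0 * w0 + w1 * w1 + w2 * w2 + w3 * w3 + w4 * w4 + w5 * w5) * hv2 + hw2 - (v0 * w0 + v1 * w1 + v2 * w2 + v3 * w3 + v4 * w4 + v5 * w5) * hvw
  calc lam + mu = (s0 * s0 * (v0 * v0) + s0 * s1 * (v0 * v1) + s0 * s2 * (v0 * v2) + s1 * s0 * (v1 * v0) + s1 * s1 * (v1 * v1) + s1 * s2 * (v1 * v2) + s1 * s3 * (v1 * v3) + s2 * s0 * (v2 * v0) + s2 * s1 * (v2 * v1) + s2 * s2 * (v2 * v2) + s2 * s3 * (v2 * v3) + s2 * s4 * (v2 * v4) + s3 * s1 * (v3 * v1) + s3 * s2 * (v3 * v2) + s3 * s3 * (v3 * v3) + s3 * s4 * (v3 * v4) + s3 * s5 * (v3 * v5) + s4 * s2 * (v4 * v2) + s4 * s3 * (v4 * v3) + s4 * s4 * (v4 * v4) + s4 * s5 * (v4 * v5) + s5 * s3 * (v5 * v3) + s5 * s4 * (v5 * v4) + s5 * s5 * (v5 * v5)) + (s0 * s0 * (w0 * w0) + s0 * s1 * (w0 * w1) + s0 * s2 * (w0 * w2) + s1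 * s0 * (w1 * w0) + s1 * s1 * (w1 * w1) + s1 * s2 * (w1 * w2) + s1 * s3 * (w1 * w3) + s2 * s0 * (w2 * w0) + s2 * s1 * (w2 * w1) + s2 * s2 * (w2 * w2) + s2 * s3 * (w2 * w3) + s2 * s4 * (w2 * w4) + s3 * s1 * (w3 * w1) + s3 * s2 * (w3 * w2) + s3 * s3 * (w3 * w3) + s3 * s4 * (w3 * w4) + s3 * s5 * (w3 * w5) + s4 * s2 * (w4 * w2) + s4 * s3 * (w4 * w3) + s4 * s4 * (w4 * w4) + s4 * s5 * (w4 * w5) + s5 * s3 * (w5 * w3) + s5 * s4 * (w5 * w4) + s5 * s5 * (w5 * w5)) := by rw [hl, hm]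
    _ = s0 * s0 * ((v0 * w1 - v1 * w0) * (v0 * w1 - v1 * w0)) + s0 * s0 * ((v0 * w2 - v2 * w0) * (v0 * w2 - v2 * w0)) + s0 * s0 * ((v0 * w3 - v3 * w0) * (v0 * w3 - v3 * w0)) + s0 * s0 * ((v0 * w4 - v4 * w0) * (v0 * w4 - v4 * w0)) + s0 * s0 * ((v0 * w5 - v5 * w0) * (v0 * w5 - v5 * w0)) + s0 * s1 * ((v0 * w2 - v2 * w0) * (v1 * w2 - v2 * w1)) + s0 * s1 * ((v0 * w3 - v3 * w0) * (v1 * w3 - v3 * w1)) + s0 * s1 * ((v0 * w4 - v4 * w0) * (v1 * w4 - v4 * w1)) + s0 * s1 * ((v0 * w5 - v5 * w0) * (v1 * w5 - v5 * w1)) - s0 * s2 * ((v0 * w1 - v1 * w0) * (v1 * w2 - v2 * w1)) + s0 * s2 * ((v0 * w3 - v3 * w0) * (v2 * w3 - v3 * w2)) + s0 * s2 * ((v0 * w4 - v4 * w0) * (v2 * w4 - v4 * w2)) + s0 * s2 * ((v0 * w5 - v5 * w0) * (v2 * w5 - v5 * w2)) + s1 * s0 * ((v1 * w2 - v2 * w1)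 * (v0 * w2 - v2 * w0)) + s1 * s0 * ((v1 * w3 - v3 * w1) * (v0 * w3 - v3 * w0)) + s1 * s0 * ((v1 * w4 - v4 * w1) * (v0 * w4 - v4 * w0)) + s1 * s0 * ((v1 * w5 - v5 * w1) * (v0 * w5 - v5 * w0)) + s1 * s1 * ((v0 * w1 - v1 * w0) * (v0 * w1 - v1 * w0)) + s1 * s1 * ((v1 * w2 - v2 * w1) * (v1 * w2 - v2 * w1)) + s1 * s1 * ((v1 * w3 - v3 * w1) * (v1 * w3 - v3 * w1)) + s1 * s1 * ((v1 * w4 - v4 * w1) * (v1 * w4 - v4 * w1)) + s1 * s1 * ((v1 * w5 - v5 * w1) * (v1 * w5 - v5 * w1)) + s1 * s2 * ((v0 * w1 - v1 * w0) * (v0 * w2 - v2 * w0)) + s1 * s2 * ((v1 * w3 - v3 * w1) * (v2 * w3 - v3 * w2)) + s1 * s2 * ((v1 * w4 - v4 * w1) * (v2 * w4 - v4 * w2)) + s1 * s2 * ((v1 * w5 - v5 * w1) * (v2 * w5 - v5 * w2)) + s1 * s3 * ((v0 * w1 - v1 * w0) * (v0 * w3 - v3 * w0)) - s1 * s3 *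 ((v1 * w2 - v2 * w1) * (v2 * w3 - v3 * w2)) + s1 * s3 * ((v1 * w4 - v4 * w1) * (v3 * w4 - v4 * w3)) + s1 * s3 * ((v1 * w5 - v5 * w1) * (v3 * w5 - v5 * w3)) - s2 * s0 * ((v1 * w2 - v2 * w1) * (v0 * w1 - v1 * w0)) + s2 * s0 * ((v2 * w3 - v3 * w2) * (v0 * w3 - v3 * w0)) + s2 * s0 * ((v2 * w4 - v4 * w2) * (v0 * w4 - v4 * w0)) + s2 * s0 * ((v2 * w5 - v5 * w2) * (v0 * w5 - v5 * w0)) + s2 * s1 * ((v0 * w2 - v2 * w0) * (v0 * w1 - v1 * w0)) + s2 * s1 * ((v2 * w3 - v3 * w2) * (v1 * w3 - v3 * w1)) + s2 * s1 * ((v2 * w4 - v4 * w2) * (v1 * w4 - v4 * w1)) + s2 * s1 * ((v2 * w5 - v5 * w2) * (v1 * w5 - v5 * w1)) + s2 * s2 * ((v0 * w2 - v2 * w0) * (v0 * w2 - v2 * w0)) + s2 * s2 * ((v1 * w2 - v2 * w1) * (v1 * w2 - v2 * w1)) + s2 * s2 * ((v2 * w3 - v3 * w2) * (v2 * w3 -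 v3 * w2)) + s2 * s2 * ((v2 * w4 - v4 * w2) * (v2 * w4 - v4 * w2)) + s2 * s2 * ((v2 * w5 - v5 * w2) * (v2 * w5 - v5 * w2)) + s2 * s3 * ((v0 * w2 - v2 * w0) * (v0 * w3 - v3 * w0)) + s2 * s3 * ((v1 * w2 - v2 * w1) * (v1 * w3 - v3 * w1)) + s2 * s3 * ((v2 * w4 - v4 * w2) * (v3 * w4 - v4 * w3)) + s2 * s3 * ((v2 * w5 - v5 * w2) * (v3 * w5 - v5 * w3)) + s2 * s4 * ((v0 * w2 - v2 * w0) * (v0 * w4 - v4 * w0)) + s2 * s4 * ((v1 * w2 - v2 * w1) * (v1 * w4 - v4 * w1)) - s2 * s4 * ((v2 * w3 - v3 * w2) * (v3 * w4 - v4 * w3)) + s2 * s4 * ((v2 * w5 - v5 * w2) * (v4 * w5 - v5 * w4)) + s3 * s1 * ((v0 * w3 - v3 * w0) * (v0 * w1 - v1 * w0)) - s3 * s1 * ((v2 * w3 - v3 * w2) * (v1 * w2 - v2 * w1)) + s3 * s1 * ((v3 * w4 - v4 * w3) * (v1 * w4 - v4 * w1)) + s3 * s1 * ((v3 * w5 -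 v5 * w3) * (v1 * w5 - v5 * w1)) + s3 * s2 * ((v0 * w3 - v3 * w0) * (v0 * w2 - v2 * w0)) + s3 * s2 * ((v1 * w3 - v3 * w1) * (v1 * w2 - v2 * w1)) + s3 * s2 * ((v3 * w4 - v4 * w3) * (v2 * w4 - v4 * w2)) + s3 * s2 * ((v3 * w5 - v5 * w3) * (v2 * w5 - v5 * w2)) + s3 * s3 * ((v0 * w3 - v3 * w0) * (v0 * w3 - v3 * w0)) + s3 * s3 * ((v1 * w3 - v3 * w1) * (v1 * w3 - v3 * w1)) + s3 * s3 * ((v2 * w3 - v3 * w2) * (v2 * w3 - v3 * w2)) + s3 * s3 * ((v3 * w4 - v4 * w3) * (v3 * w4 - v4 * w3)) + s3 * s3 * ((v3 * w5 - v5 * w3) * (v3 * w5 - v5 * w3)) + s3 * s4 * ((v0 * w3 - v3 * w0) * (v0 * w4 - v4 * w0)) + s3 * s4 * ((v1 * w3 - v3 * w1) * (v1 * w4 - v4 * w1)) + s3 * s4 * ((v2 * w3 - v3 * w2) * (v2 * w4 - v4 * w2)) + s3 * s4 * ((v3 * w5 - v5 * w3) * (v4 * w5 - v5 * w4)) + s3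 * s5 * ((v0 * w3 - v3 * w0) * (v0 * w5 - v5 * w0)) + s3 * s5 * ((v1 * w3 - v3 * w1) * (v1 * w5 - v5 * w1)) + s3 * s5 * ((v2 * w3 - v3 * w2) * (v2 * w5 - v5 * w2)) - s3 * s5 * ((v3 * w4 - v4 * w3) * (v4 * w5 - v5 * w4)) + s4 * s2 * ((v0 * w4 - v4 * w0) * (v0 * w2 - v2 * w0)) + s4 * s2 * ((v1 * w4 - v4 * w1) * (v1 * w2 - v2 * w1)) - s4 * s2 * ((v3 * w4 - v4 * w3) * (v2 * w3 - v3 * w2)) + s4 * s2 * ((v4 * w5 - v5 * w4) * (v2 * w5 - v5 * w2)) + s4 * s3 * ((v0 * w4 - v4 * w0) * (v0 * w3 - v3 * w0)) + s4 * s3 * ((v1 * w4 - v4 * w1) * (v1 * w3 - v3 * w1)) + s4 * s3 * ((v2 * w4 - v4 * w2) * (v2 * w3 - v3 * w2)) + s4 * s3 * ((v4 * w5 - v5 * w4) * (v3 * w5 - v5 * w3)) + s4 * s4 * ((v0 * w4 - v4 * w0) * (v0 * w4 - v4 * w0)) + s4 * s4 * ((v1 * w4 - v4 * w1) * (v1 *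 w4 - v4 * w1)) + s4 * s4 * ((v2 * w4 - v4 * w2) * (v2 * w4 - v4 * w2)) + s4 * s4 * ((v3 * w4 - v4 * w3) * (v3 * w4 - v4 * w3)) + s4 * s4 * ((v4 * w5 - v5 * w4) * (v4 * w5 - v5 * w4)) + s4 * s5 * ((v0 * w4 - v4 * w0) * (v0 * w5 - v5 * w0)) + s4 * s5 * ((v1 * w4 - v4 * w1) * (v1 * w5 - v5 * w1)) + s4 * s5 * ((v2 * w4 - v4 * w2) * (v2 * w5 - v5 * w2)) + s4 * s5 * ((v3 * w4 - v4 * w3) * (v3 * w5 - v5 * w3)) + s5 * s3 * ((v0 * w5 - v5 * w0) * (v0 * w3 - v3 * w0)) + s5 * s3 * ((v1 * w5 - v5 * w1) * (v1 * w3 - v3 * w1)) + s5 * s3 * ((v2 * w5 - v5 * w2) * (v2 * w3 - v3 * w2)) - s5 * s3 * ((v4 * w5 - v5 * w4) * (v3 * w4 - v4 * w3)) + s5 * s4 * ((v0 * w5 - v5 * w0) * (v0 * w4 - v4 * w0)) + s5 * s4 * ((v1 * w5 - v5 * w1) * (v1 * w4 - v4 * w1)) + s5 * s4 * ((v2 *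 w5 - v5 * w2) * (v2 * w4 - v4 * w2)) + s5 * s4 * ((v3 * w5 - v5 * w3) * (v3 * w4 - v4 * w3)) + s5 * s5 * ((v0 * w5 - v5 * w0) * (v0 * w5 - v5 * w0)) + s5 * s5 * ((v1 * w5 - v5 * w1) * (v1 * w5 - v5 * w1)) + s5 * s5 * ((v2 * w5 - v5 * w2) * (v2 * w5 - v5 * w2)) + s5 * s5 * ((v3 * w5 - v5 * w3) * (v3 * w5 - v5 * w3)) + s5 * s5 * ((v4 * w5 - v5 * w4) * (v4 * w5 - v5 * w4)) := key1
    _ ≤ 8 / 7 * ((s0 * s0 + s1 * s1 + s2 * s2 + s3 * s3 + s4 * s4 + s5 * s5) * ((v0 * w1 - v1 * w0) ^ 2 + (v0 * w2 - v2 * w0) ^ 2 + (v0 * w3 - v3 * w0) ^ 2 + (v0 * w4 - v4 * w0) ^ 2 + (v0 * w5 - v5 * w0) ^ 2 + (v1 * w2 - v2 * w1) ^ 2 + (v1 * w3 - v3 * w1) ^ 2 + (v1 * w4 - v4 * w1) ^ 2 + (v1 * w5 - v5 * w1) ^ 2 + (v2 * w3 - v3 * w2) ^ 2 + (v2 * w4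 - v4 * w2) ^ 2 + (v2 * w5 - v5 * w2) ^ 2 + (v3 * w4 - v4 * w3) ^ 2 + (v3 * w5 - v5 * w3) ^ 2 + (v4 * w5 - v5 * w4) ^ 2)) := main
    _ = 8 / 7 := by rw [hs, key2]; norm_num

private lemma helper (u : Fin 6 → ℝ) (hu : ∀ i, 0 ≤ u i) (hsum : ∑ i, u i = 1)
    (v w : Fin 6 → ℝ) (lam mu : ℝ)
    (hv : MstarH6 u *ᵥ v = lam • v) (hw : MstarH6 u *ᵥ w = mu • w)
    (hv2 : v 0 * v 0 + v 1 * v 1 + v 2 * v 2 + v 3 * v 3 + v 4 * v 4 + v 5 * v 5 = 1)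
    (hw2 : w 0 * w 0 + w 1 * w 1 + w 2 * w 2 + w 3 * w 3 + w 4 * w 4 + w 5 * w 5 = 1)
    (hvw : v 0 * w 0 + v 1 * w 1 + v 2 * w 2 + v 3 * w 3 + v 4 * w 4 + v 5 * w 5 = 0) :
    lam + mu ≤ 8 / 7 := by
  have hsq : ∀ a b : Fin 6, Real.sqrt (u a * u b) = Real.sqrt (u a) * Real.sqrt (u b) :=
    fun a b => Real.sqrt_mul (hu a) _
  have hs : Real.sqrt (u 0) * Real.sqrt (u 0) + Real.sqrt (u 1) * Real.sqrt (u 1) + Real.sqrt (u 2) * Real.sqrt (u 2) + Real.sqrt (u 3) * Real.sqrt (u 3) + Real.sqrt (u 4) * Real.sqrt (u 4) + Real.sqrt (u 5) * Real.sqrt (u 5) = 1 := by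
    rw [Real.mul_self_sqrt (hu 0), Real.mul_self_sqrt (hu 1), Real.mul_self_sqrt (hu 2),
      Real.mul_self_sqrt (hu 3), Real.mul_self_sqrt (hu 4), Real.mul_self_sqrt (hu 5)]
    rw [Fin.sum_univ_six] at hsum
    exact hsum
  have hdotv : ∑ a, v a * ((MstarH6 u *ᵥ v) a) = ∑ a, v a * ((lam • v) a) := by rw [hv]
  have hdotw : ∑ a, w a * ((MstarH6 u *ᵥ w) a) = ∑ a, w a * ((mu • w) a) := by rw [hw]
  simp [MstarH6, AH6, Matrix.mulVec, dotProduct, Fin.sum_univ_six, hsq,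
    Matrix.vecHead, Matrix.vecTail, Function.comp, show (5:Fin 6) = Fin.succ 4 from rfl,
    Matrix.cons_val_succ] at hdotv hdotw
  have hl : lam = Real.sqrt (u 0) * Real.sqrt (u 0) * (v 0 * v 0) + Real.sqrt (u 0) * Real.sqrt (u 1) * (v 0 * v 1) + Real.sqrt (u 0) * Real.sqrt (u 2) * (v 0 * v 2) + Real.sqrt (u 1) * Real.sqrt (u 0) * (v 1 * v 0) + Real.sqrt (u 1) * Real.sqrt (u 1) * (v 1 * v 1) + Real.sqrt (u 1) * Real.sqrt (u 2) * (v 1 * v 2) + Real.sqrt (u 1) * Real.sqrt (u 3) * (v 1 * v 3) + Real.sqrt (u 2) * Real.sqrt (u 0) * (v 2 * v 0) + Real.sqrt (u 2) * Real.sqrt (u 1) * (v 2 * v 1) + Real.sqrt (u 2) * Real.sqrt (u 2) * (v 2 * v 2) + Real.sqrt (u 2) * Real.sqrt (u 3) * (v 2 * v 3) + Real.sqrt (u 2) * Real.sqrt (u 4) * (v 2 * v 4) + Real.sqrt (u 3) * Real.sqrt (u 1) * (v 3 * v 1) + Real.sqrt (u 3) * Real.sqrt (u 2) * (v 3 * v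 2) + Real.sqrt (u 3) * Real.sqrt (u 3) * (v 3 * v 3) + Real.sqrt (u 3) * Real.sqrt (u 4) * (v 3 * v 4) + Real.sqrt (u 3) * Real.sqrt (u 5) * (v 3 * v 5) + Real.sqrt (u 4) * Real.sqrt (u 2) * (v 4 * v 2) + Real.sqrt (u 4) * Real.sqrt (u 3) * (v 4 * v 3) + Real.sqrt (u 4) * Real.sqrt (u 4) * (v 4 * v 4) + Real.sqrt (u 4) * Real.sqrt (u 5) * (v 4 * v 5) + Real.sqrt (u 5) * Real.sqrt (u 3) * (v 5 * v 3) + Real.sqrt (u 5) * Real.sqrt (u 4) * (v 5 * v 4) + Real.sqrt (u 5) * Real.sqrt (u 5) * (v 5 * v 5) := by linear_combination (-lam) * hv2 - hdotv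
  have hm : mu = Real.sqrt (u 0) * Real.sqrt (u 0) * (w 0 * w 0) + Real.sqrt (u 0) * Real.sqrt (u 1) * (w 0 * w 1) + Real.sqrt (u 0) * Real.sqrt (u 2) * (w 0 * w 2) + Real.sqrt (u 1) * Real.sqrt (u 0) * (w 1 * w 0) + Real.sqrt (u 1) * Real.sqrt (u 1) * (w 1 * w 1) + Real.sqrt (u 1) * Real.sqrt (u 2) * (w 1 * w 2) + Real.sqrt (u 1) * Real.sqrt (u 3) * (w 1 * w 3) + Real.sqrt (u 2) * Real.sqrt (u 0) * (w 2 * w 0) + Real.sqrt (u 2) * Real.sqrt (u 1) * (w 2 * w 1) + Real.sqrt (u 2) * Real.sqrt (u 2) * (w 2 * w 2) + Real.sqrt (u 2) * Real.sqrt (u 3) * (w 2 * w 3) + Real.sqrt (u 2) * Real.sqrt (u 4) * (w 2 * w 4) + Real.sqrt (u 3) * Real.sqrt (u 1) * (w 3 * w 1) + Real.sqrt (u 3) * Real.sqrt (u 2) * (w 3 * w 2) + Real.sqrt (u 3) * Real.sqrt (u 3) * (w 3 * w 3) + Real.sqrt (u 3) * Real.sqrt (u 4) * (w 3 * w 4)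 + Real.sqrt (u 3) * Real.sqrt (u 5) * (w 3 * w 5) + Real.sqrt (u 4) * Real.sqrt (u 2) * (w 4 * w 2) + Real.sqrt (u 4) * Real.sqrt (u 3) * (w 4 * w 3) + Real.sqrt (u 4) * Real.sqrt (u 4) * (w 4 * w 4) + Real.sqrt (u 4) * Real.sqrt (u 5) * (w 4 * w 5) + Real.sqrt (u 5) * Real.sqrt (u 3) * (w 5 * w 3) + Real.sqrt (u 5) * Real.sqrt (u 4) * (w 5 * w 4) + Real.sqrt (u 5) * Real.sqrt (u 5) * (w 5 * w 5) := by linear_combination (-mu) * hw2 - hdotw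
  exact core (Real.sqrt (u 0)) (Real.sqrt (u 1)) (Real.sqrt (u 2)) (Real.sqrt (u 3))
    (Real.sqrt (u 4)) (Real.sqrt (u 5)) (v 0) (v 1) (v 2) (v 3) (v 4) (v 5)
    (w 0) (w 1) (w 2) (w 3) (w 4) (w 5) lam mu hs hv2 hw2 hvw hl hm


set_option maxHeartbeats 4000000 in
/-- for nonnegative weights summing to 1, the sum of any two distinct
eigenvalues of `M*` (in particular, `λ₁(M*) + λ₂(M*)`) is at most `8/7`. -/
theorem stmt13 (u : Fin 6 → ℝ) (hu : ∀ i, 0 ≤ u i) (hsum : ∑ i, u i = 1)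
    (hM : (MstarH6 u).IsHermitian) :
    ∀ i j : Fin 6, i ≠ j →
      hM.eigenvalues i + hM.eigenvalues j ≤ (8 / 7 : ℝ) := by
  intro i j hij
  have horth := hM.eigenvectorBasis.orthonormal
  have hii := orthonormal_iff_ite.mp horth i i
  have hjj := orthonormal_iff_ite.mp horth j j
  have hijo := orthonormal_iff_ite.mp horth i j
  rw [PiLp.inner_apply] at hii hjj hijo
  simp only [RCLike.inner_apply, starRingEnd_apply, star_trivial, Fin.sum_univ_six,
    if_pos rfl] at hii hjj
  simp only [RCLike.inner_apply, starRingEnd_apply, star_trivial, Fin.sum_univ_six] at hijo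
  rw [if_neg hij] at hijo
  exact helper u hu hsum _ _ _ _ (hM.mulVec_eigenvectorBasis i) (hM.mulVec_eigenvectorBasis j)
    hii hjj (by linear_combination hijo)
end
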